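/- arXiv:2011.13830 — 9 statements merged into one kernel-verified Lean document; each statement's English description precedes it below -/
import Mathlib

section
/- Let r be a polymatroid on [n] of rank d and let S ⊆ [n] with |S| ≥ 2. Then S is r̄-inseparable if and only if S contains no loop of r. -/
/-- A polymatroid on `[n]`: a nonnegative-integer-valued function on subsets of `[n]`
that vanishes on the empty set, is monotone under inclusion, and is submodular. -/
def IsPolymatroid {n : ℕ} (r : Finset (Fin n) → ℕ) : Prop :=
  r ∅ = 0 ∧ (∀ S T, S ⊆ T → r S ≤ r T) ∧
    ∀ S T, r (S ∪ T) + r (S ∩ T) ≤ r S + r T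

/-- `S` is `r`-inseparable: for every pair of disjoint nonempty sets `S₁, S₂` with
`S = S₁ ∪ S₂` one has `r S < r S₁ + r S₂`. -/
def IsInseparable {n : ℕ} (r : Finset (Fin n) → ℕ) (S : Finset (Fin n)) : Prop :=
  ∀ S₁ S₂ : Finset (Fin n), S₁.Nonempty → S₂.Nonempty → Disjoint S₁ S₂ →
    S₁ ∪ S₂ = S → r S < r S₁ + r S₂

/-- `r̄ = r_0 + r_1 + ⋯ + r_d`, where `r_k S = min (d - k) (r S)` is the `k`-th
truncation of a polymatroid `r` of rank `d`. -/
def polymatroidBar {n : ℕ} (r : Finset (Fin n) → ℕ) (d : ℕ) (S : Finset (Fin n)) : ℕ :=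
  ∑ k ∈ Finset.range (d + 1), min (d - k) (r S)

/-- For a polymatroid `r` of rank `d` and `S` with `|S| ≥ 2`, the set `S` is
`r̄`-inseparable if and only if `S` contains no loop of `r`. -/
theorem inseparable_bar_iff_no_loop {n : ℕ} (r : Finset (Fin n) → ℕ)
    (hr : IsPolymatroid r) (d : ℕ) (hd : r Finset.univ = d)
    (S : Finset (Fin n)) (hS : 2 ≤ S.card) :
    IsInseparable (polymatroidBar r d) S ↔ ∀ x ∈ S, r {x} ≠ 0 := by

  obtain ⟨h0, hmono, hsub⟩ := hr
  constructor
  · intro hins x hxS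
    intro hx0
    have hne : (S.erase x).Nonempty := by
      rw [← Finset.card_pos, Finset.card_erase_of_mem hxS]; omega
    have hdisj : Disjoint ({x} : Finset (Fin n)) (S.erase x) := by
      simp [Finset.disjoint_singleton_left]
    have hun : {x} ∪ S.erase x = S := by
      ext a; simp [Finset.mem_erase]; constructor
      · rintro (rfl | ⟨_, h⟩) <;> assumption
      · intro h; by_cases hax : a = x <;> simp [hax, h]
    have hlt := hins {x} (S.erase x) ⟨x, Finset.mem_singleton_self x⟩ hne hdisj hun
    have h1 : polymatroidBar r d {x} = 0 := by
      simp [polymatroidBar, hx0]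
    have h2 : polymatroidBar r d (S.erase x) ≤ polymatroidBar r d S := by
      apply Finset.sum_le_sum
      intro k _
      exact min_le_min le_rfl (hmono _ _ (Finset.erase_subset x S))
    omega
  · intro hnl S₁ S₂ h1 h2 hdisj hun
    obtain ⟨x, hx⟩ := h1
    obtain ⟨y, hy⟩ := h2
    have hxS : x ∈ S := hun ▸ Finset.mem_union_left _ hx
    have hyS : y ∈ S := hun ▸ Finset.mem_union_right _ hy
    have ha : 1 ≤ r S₁ :=
      lt_of_lt_of_le (Nat.pos_of_ne_zero (hnl x hxS))
        (hmono _ _ (Finset.singleton_subset_iff.mpr hx))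
    have hb : 1 ≤ r S₂ :=
      lt_of_lt_of_le (Nat.pos_of_ne_zero (hnl y hyS))
        (hmono _ _ (Finset.singleton_subset_iff.mpr hy))
    have hd1 : 1 ≤ d := le_trans ha (hd ▸ hmono _ _ (Finset.subset_univ S₁))
    have hm : r S ≤ r S₁ + r S₂ := by
      have hs := hsub S₁ S₂
      have hint : S₁ ∩ S₂ = ∅ := Finset.disjoint_iff_inter_eq_empty.mp hdisj
      rw [hun, hint, h0] at hs
      omega
    unfold polymatroidBar
    rw [← Finset.sum_add_distrib]
    apply Finset.sum_lt_sum
    · intro k _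
      omega
    · exact ⟨d - 1, Finset.mem_range.mpr (by omega), by omega⟩
end

section
/- Let r be a polymatroid on [n] of rank d. Let S, T ⊆ [n] be such that (1) S∩T ≠ ∅, S ⊄ T and T ⊄ S; (2) r̄(S∩T) < r̄(S) and r̄(S∩T) < r̄(T); and (3) the sets S, T and S∪T are all r̄-inseparable. Then r̄(S∩T) + r̄(S∪T) < r̄(S) + r̄(T). -/
lemma barF (d m : ℕ) :
    2 * (∑ k ∈ Finset.range (d + 1), min k m) + (d - m) * (d - m + 1) = d * (d + 1) := by
  induction d with
  | zero => simp
  | succ d ih =>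
    rw [Finset.sum_range_succ]
    rcases le_or_gt m d with h | h
    · obtain ⟨e, rfl⟩ : ∃ e, d = m + e := ⟨d - m, by omega⟩
      have h1 : min (m + e + 1) m = m := by omega
      have h2 : m + e - m = e := by omega
      have h3 : m + e + 1 - m = e + 1 := by omega
      rw [h1, h3]
      rw [h2] at ih
      nlinarith [ih]
    · have h1 : min (d + 1) m = d + 1 := by omega
      have h2 : d - m = 0 := by omega
      have h3 : d + 1 - m = 0 := by omega
      rw [h1, h3]
      rw [h2] at ih
      nlinarith [ih]

lemma bar_eq {n : ℕ} (r : Finset (Fin n) → ℕ) (d : ℕ) (X : Finset (Fin n)) :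
    polymatroidBar r d X = ∑ k ∈ Finset.range (d + 1), min k (r X) := by
  rw [polymatroidBar, ← Finset.sum_range_reflect]
  apply Finset.sum_congr rfl
  intro k hk
  simp only [Finset.mem_range] at hk
  congr 1
  omega

lemma bar_mono {n : ℕ} (r : Finset (Fin n) → ℕ) (d : ℕ) (X Y : Finset (Fin n))
    (h : r X ≤ r Y) : polymatroidBar r d X ≤ polymatroidBar r d Y :=
  Finset.sum_le_sum fun k _ => min_le_min le_rfl h

lemma key (A S' T' U : ℕ) (h1 : S' < A) (h2 : T' < A) (h3 : U ≤ S') (h4 : U ≤ T')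
    (h5 : S' + T' ≤ A + U) :
    S' * (S' + 1) + T' * (T' + 1) < A * (A + 1) + U * (U + 1) := by
  zify at *
  nlinarith [mul_nonneg (by linarith : (0:ℤ) ≤ A - S') (by linarith : (0:ℤ) ≤ A - T'),
    mul_nonneg (by linarith : (0:ℤ) ≤ A + U - S' - T') (by linarith : (0:ℤ) ≤ A + S' - U - T'),
    mul_nonneg (by linarith : (0:ℤ) ≤ S' - U) (by linarith : (0:ℤ) ≤ T' - U)]

/-- Let `r` be a polymatroid of rank `d` and `S, T` subsets such that
(1) `S ∩ T ≠ ∅`, `S ⊄ T`, `T ⊄ S`; (2) `r̄(S∩T) < r̄(S)` and `r̄(S∩T) < r̄(T)`;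
(3) `S`, `T` and `S ∪ T` are `r̄`-inseparable.
Then `r̄(S∩T) + r̄(S∪T) < r̄(S) + r̄(T)`. -/
theorem bar_strict_submodularity {n : ℕ} (r : Finset (Fin n) → ℕ)
    (hr : IsPolymatroid r) (d : ℕ) (hd : r Finset.univ = d)
    (S T : Finset (Fin n))
    (h1 : (S ∩ T).Nonempty) (h2 : ¬ S ⊆ T) (h3 : ¬ T ⊆ S)
    (h4 : polymatroidBar r d (S ∩ T) < polymatroidBar r d S)
    (h5 : polymatroidBar r d (S ∩ T) < polymatroidBar r d T)
    (h6 : IsInseparable (polymatroidBar r d) S)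
    (h7 : IsInseparable (polymatroidBar r d) T)
    (h8 : IsInseparable (polymatroidBar r d) (S ∪ T)) :
    polymatroidBar r d (S ∩ T) + polymatroidBar r d (S ∪ T) <
      polymatroidBar r d S + polymatroidBar r d T := by
  obtain ⟨-, hmono, hsub⟩ := hr
  have hud : r (S ∪ T) ≤ d := hd ▸ hmono _ _ (Finset.subset_univ _)
  have hsu : r S ≤ r (S ∪ T) := hmono _ _ Finset.subset_union_left
  have htu : r T ≤ r (S ∪ T) := hmono _ _ Finset.subset_union_right
  have has : r (S ∩ T) < r S := by
    by_contra h
    exact absurd (bar_mono r d S (S ∩ T) (by omega)) (by omega)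
  have hat : r (S ∩ T) < r T := by
    by_contra h
    exact absurd (bar_mono r d T (S ∩ T) (by omega)) (by omega)
  have hsm : r (S ∪ T) + r (S ∩ T) ≤ r S + r T := hsub S T
  have e1 := barF d (r (S ∩ T))
  have e2 := barF d (r S)
  have e3 := barF d (r T)
  have e4 := barF d (r (S ∪ T))
  rw [← bar_eq] at e1 e2 e3 e4
  have hk : (d - r S) * (d - r S + 1) + (d - r T) * (d - r T + 1) <
      (d - r (S ∩ T)) * (d - r (S ∩ T) + 1) + (d - r (S ∪ T)) * (d - r (S ∪ T) + 1) :=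
    key _ _ _ _ (by omega) (by omega) (by omega) (by omega) (by omega)
  linarith
end

section
/- Let r be the rank function of a matroid M of rank d on [n]. The vertices (extreme points) of the polytope B(r̄) ⊆ ℝ^n are exactly those points v ∈ ℝ^n whose support {i ∈ [n] : vᵢ ≠ 0} is a basis of M and whose nonzero entries comprise exactly the numbers 1, 2, …, d (each occurring once). -/
/-- The rank function of an independence system: `r S` is the maximum cardinality of an
independent subset of `S`. -/
def matroidRank {n : ℕ} (Indep : Finset (Fin n) → Prop) [DecidablePred Indep]
    (S : Finset (Fin n)) : ℕ :=
  (S.powerset.filter Indep).sup Finset.card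

/-- The base polytope of an integer-valued set function `f` on subsets of `[n]`:
all nonnegative `x ∈ ℝⁿ` with `∑_{i ∈ S} x_i ≤ f S` for all `S` and `∑ x_i = f [n]`. -/
def basePolytope {n : ℕ} (f : Finset (Fin n) → ℕ) : Set (Fin n → ℝ) :=
  {x | (∀ i, 0 ≤ x i) ∧ (∀ S : Finset (Fin n), ∑ i ∈ S, x i ≤ (f S : ℝ)) ∧
    ∑ i, x i = (f Finset.univ : ℝ)}

open Finset

namespace MRK
variable {n : ℕ} {Indep : Finset (Fin n) → Prop} [DecidablePred Indep]

lemma rank_ge_of_indep {I S : Finset (Fin n)} (hI : Indep I) (hIS : I ⊆ S) :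
    I.card ≤ matroidRank Indep S :=
  Finset.le_sup (by simp [Finset.mem_filter, Finset.mem_powerset, hI, hIS])

lemma exists_indep_rank (hempty : Indep ∅) (S : Finset (Fin n)) :
    ∃ I, I ⊆ S ∧ Indep I ∧ I.card = matroidRank Indep S := by
  have hne : (S.powerset.filter Indep).Nonempty :=
    ⟨∅, by simp [Finset.mem_filter, hempty]⟩
  obtain ⟨I, hI, hcard⟩ := Finset.exists_mem_eq_sup _ hne Finset.card
  simp only [Finset.mem_filter, Finset.mem_powerset] at hI
  exact ⟨I, hI.1, hI.2, hcard.symm⟩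

lemma rank_le_card (S : Finset (Fin n)) : matroidRank Indep S ≤ S.card := by
  apply Finset.sup_le
  intro I hI
  simp only [Finset.mem_filter, Finset.mem_powerset] at hI
  exact Finset.card_le_card hI.1

lemma rank_mono {S T : Finset (Fin n)} (h : S ⊆ T) :
    matroidRank Indep S ≤ matroidRank Indep T := by
  apply Finset.sup_le
  intro I hI
  simp only [Finset.mem_filter, Finset.mem_powerset] at hI
  exact rank_ge_of_indep hI.2 (hI.1.trans h)

lemma indep_of_rank_eq_card (hempty : Indep ∅) {S : Finset (Fin n)}
    (h : matroidRank Indep S = S.card) : Indep S := by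
  obtain ⟨I, hIS, hI, hcard⟩ := exists_indep_rank hempty S
  have hle : matroidRank Indep S ≤ S.card := rank_le_card S
  have : I = S := Finset.eq_of_subset_of_card_le hIS (by omega)
  rwa [← this]

lemma rank_indep {S : Finset (Fin n)} (hS : Indep S) :
    matroidRank Indep S = S.card :=
  le_antisymm (rank_le_card S) (rank_ge_of_indep hS (le_refl _))

variable (hempty : Indep ∅)
variable (hsubset : ∀ I J, Indep J → I ⊆ J → Indep I)
variable (hexchange : ∀ I J, Indep I → Indep J → I.card < J.card →
      ∃ e ∈ J \ I, Indep (insert e I))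

include hempty hsubset hexchange in
/-- extension: any independent subset of X extends to one of full rank in X -/
lemma exists_extension {I X : Finset (Fin n)} (hI : Indep I) (hIX : I ⊆ X) :
    ∃ J, I ⊆ J ∧ J ⊆ X ∧ Indep J ∧ J.card = matroidRank Indep X := by
  by_cases h : I.card = matroidRank Indep X
  · exact ⟨I, le_refl _, hIX, hI, h⟩
  · have hlt : I.card < matroidRank Indep X :=
      lt_of_le_of_ne (rank_ge_of_indep hI hIX) h
    obtain ⟨K, hKX, hK, hKcard⟩ := exists_indep_rank hempty X
    obtain ⟨e, he, heI⟩ := hexchange I K hI hK (by omega)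
    simp only [Finset.mem_sdiff] at he
    have hins : insert e I ⊆ X := Finset.insert_subset (hKX he.1) hIX
    have hc : (insert e I).card = I.card + 1 := Finset.card_insert_of_notMem he.2
    have : matroidRank Indep X - (insert e I).card < matroidRank Indep X - I.card := by
      have := rank_ge_of_indep heI hins
      omega
    obtain ⟨J, hJ1, hJ2, hJ3, hJ4⟩ := exists_extension heI hins
    exact ⟨J, (Finset.subset_insert e I).trans hJ1, hJ2, hJ3, hJ4⟩
termination_by matroidRank Indep X - I.card

include hempty hsubset hexchange in
lemma rank_submodular (S T : Finset (Fin n)) :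
    matroidRank Indep (S ∪ T) + matroidRank Indep (S ∩ T)
      ≤ matroidRank Indep S + matroidRank Indep T := by
  classical
  obtain ⟨I, hIST, hI, hIcard⟩ := exists_indep_rank hempty (S ∩ T)
  obtain ⟨J, hIJ, hJX, hJ, hJcard⟩ := exists_extension hempty hsubset hexchange hI
    (hIST.trans Finset.inter_subset_union)
  have h1 : (J ∩ S).card ≤ matroidRank Indep S :=
    rank_ge_of_indep (hsubset _ _ hJ Finset.inter_subset_left) Finset.inter_subset_right
  have h2 : (J ∩ T).card ≤ matroidRank Indep T :=
    rank_ge_of_indep (hsubset _ _ hJ Finset.inter_subset_left) Finset.inter_subset_right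
  have e1 : (J ∩ S) ∪ (J ∩ T) = J ∩ (S ∪ T) := by ext a; simp; tauto
  have e2 : (J ∩ S) ∩ (J ∩ T) = J ∩ (S ∩ T) := by ext a; simp; tauto
  have hsum : (J ∩ S).card + (J ∩ T).card = (J ∩ (S ∪ T)).card + (J ∩ (S ∩ T)).card := by
    rw [← Finset.card_union_add_card_inter, e1, e2]
  have h3 : (J ∩ (S ∪ T)).card = J.card := by
    rw [Finset.inter_eq_left.mpr hJX]
  have h4 : I ⊆ J ∩ (S ∩ T) := Finset.subset_inter hIJ hIST
  have h5 : I.card ≤ (J ∩ (S ∩ T)).card := Finset.card_le_card h4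
  omega

def gbar (d m : ℕ) : ℕ := ∑ k ∈ Finset.range (d + 1), min (d - k) m


lemma gbar_reflect (d m : ℕ) : gbar d m = ∑ j ∈ Finset.range (d + 1), min j m := by
  rw [gbar, ← Finset.sum_range_reflect (fun j => min j m) (d+1)]
  apply Finset.sum_congr rfl
  intro k hk
  simp only [Finset.mem_range] at hk
  omega

lemma gbar_zero (d : ℕ) : gbar d 0 = 0 := by
  simp [gbar]

lemma gbar_mono (d : ℕ) {m m' : ℕ} (h : m ≤ m') : gbar d m ≤ gbar d m' := by
  apply Finset.sum_le_sum
  intro k _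
  omega

lemma gbar_step {d m : ℕ} (h : m < d) : gbar d (m + 1) = gbar d m + (d - m) := by
  rw [gbar_reflect, gbar_reflect]
  have : ∀ j ∈ Finset.range (d+1), min j (m+1) = min j m + (if m + 1 ≤ j then 1 else 0) := by
    intro j _
    split <;> omega
  rw [Finset.sum_congr rfl this, Finset.sum_add_distrib, ← Finset.card_filter]
  have : (Finset.range (d+1)).filter (fun j => m + 1 ≤ j) = Finset.Ico (m+1) (d+1) := by
    ext j; simp only [Finset.mem_filter, Finset.mem_range, Finset.mem_Ico]; omega
  rw [this, Nat.card_Ico]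
  omega

lemma gbar_succ_d (d m : ℕ) (h : 1 ≤ m) : gbar (d+1) m = gbar d (m-1) + (d+1) := by
  rw [gbar, gbar]
  rw [Finset.sum_range_succ]
  have h1 : min (d + 1 - (d+1)) m = 0 := by omega
  rw [h1, add_zero]
  have : ∀ k ∈ Finset.range (d+1), min (d + 1 - k) m = min (d - k) (m-1) + 1 := by
    intro k hk
    simp only [Finset.mem_range] at hk
    omega
  rw [Finset.sum_congr rfl this, Finset.sum_add_distrib]
  simp

lemma gbar_mono_d (d m : ℕ) : gbar d m ≤ gbar (d+1) m := by
  rw [gbar_reflect, gbar_reflect]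
  exact Finset.sum_le_sum_of_subset (by simp)

/-- sum of a subset of {1,…,d} of cardinality t is at most gbar d t -/
lemma sum_subset_le (d : ℕ) : ∀ A : Finset ℕ, A ⊆ Finset.Icc 1 d →
    (∑ a ∈ A, a) ≤ gbar d A.card := by
  induction d with
  | zero =>
    intro A hA
    have : A = ∅ := by
      rw [Finset.eq_empty_iff_forall_notMem]
      intro a ha
      exact absurd (hA ha) (by simp)
    simp [this, gbar_zero]
  | succ d ih =>
    intro A hA
    by_cases hm : (d + 1) ∈ A
    · have herase : A.erase (d+1) ⊆ Finset.Icc 1 d := by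
        intro a ha
        simp only [Finset.mem_erase] at ha
        have := hA ha.2
        simp only [Finset.mem_Icc] at this ⊢
        omega
      have hsum := ih _ herase
      have hcard : (A.erase (d+1)).card = A.card - 1 := Finset.card_erase_of_mem hm
      have h1 : 1 ≤ A.card := Finset.card_pos.mpr ⟨_, hm⟩ 
      rw [← Finset.sum_erase_add A _ hm, gbar_succ_d _ _ h1]
      rw [hcard] at hsum
      omega
    · have hA' : A ⊆ Finset.Icc 1 d := by
        intro a ha
        have := hA ha
        simp only [Finset.mem_Icc] at this ⊢
        have : a ≠ d + 1 := fun h => hm (h ▸ ha)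
        omega
      calc (∑ a ∈ A, a) ≤ gbar d A.card := ih _ hA'
        _ ≤ gbar (d+1) A.card := gbar_mono_d _ _

/-- sum of the top t values {d-t+1, …, d} equals gbar d t -/
lemma sum_top_eq (d : ℕ) : ∀ t ≤ d, (∑ j ∈ Finset.Icc (d - t + 1) d, j) = gbar d t := by
  intro t
  induction t with
  | zero =>
    intro _
    rw [gbar_zero]
    have : Finset.Icc (d - 0 + 1) d = ∅ := by
      rw [Finset.Icc_eq_empty_iff]
      omega
    simp [this]
  | succ t iht =>
    intro ht
    have ht' : t ≤ d := by omega
    have hlt : t < d := by omega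
    have hins : Finset.Icc (d - (t+1) + 1) d = insert (d - t) (Finset.Icc (d - t + 1) d) := by
      ext j
      simp only [Finset.mem_Icc, Finset.mem_insert]
      omega
    rw [hins, Finset.sum_insert (by simp only [Finset.mem_Icc]; omega), iht ht', gbar_step hlt]
    omega


lemma seg_eq {a b p q c : ℝ} (ha : 0 < a) (hb : 0 < b) (hab : a + b = 1)
    (hp : p ≤ c) (hq : q ≤ c) (h : a*p + b*q = c) : p = c ∧ q = c := by
  constructor
  · by_contra hne
    have h1 : p < c := lt_of_le_of_ne hp hne
    have h2 : a*p < a*c := mul_lt_mul_of_pos_left h1 ha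
    have h3 : b*q ≤ b*c := mul_le_mul_of_nonneg_left hq hb.le
    have h4 : a*c + b*c = c := by rw [← add_mul, hab, one_mul]
    linarith
  · by_contra hne
    have h1 : q < c := lt_of_le_of_ne hq hne
    have h2 : b*q < b*c := mul_lt_mul_of_pos_left h1 hb
    have h3 : a*p ≤ a*c := mul_le_mul_of_nonneg_left hp ha.le
    have h4 : a*c + b*c = c := by rw [← add_mul, hab, one_mul]
    linarith

lemma seg_zero {a b p q : ℝ} (ha : 0 < a) (hb : 0 < b) (hab : a + b = 1)
    (hp : 0 ≤ p) (hq : 0 ≤ q) (h : a*p + b*q = 0) : p = 0 ∧ q = 0 := by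
  have h1 : 0 ≤ a * p := mul_nonneg ha.le hp
  have h2 : 0 ≤ b * q := mul_nonneg hb.le hq
  have hp0 : a * p = 0 := by linarith
  have hq0 : b * q = 0 := by linarith
  constructor
  · rcases mul_eq_zero.mp hp0 with h | h
    · exact absurd h (ne_of_gt ha)
    · exact h
  · rcases mul_eq_zero.mp hq0 with h | h
    · exact absurd h (ne_of_gt hb)
    · exact h

lemma gbar_vals_submod {d u a s t : ℕ} (has : a ≤ s) (hat : a ≤ t) (hsu : s ≤ u)
    (htu : t ≤ u) (hsub : u + a ≤ s + t) :
    gbar d u + gbar d a ≤ gbar d s + gbar d t := by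
  rw [gbar, gbar, gbar, gbar, ← Finset.sum_add_distrib, ← Finset.sum_add_distrib]
  apply Finset.sum_le_sum
  intro k _
  omega

lemma gbar_strict {d m : ℕ} (hm : m ≤ d) (h : gbar d m = gbar d d) : m = d := by
  by_contra hne
  have hlt : m < d := by omega
  have h1 := gbar_step hlt
  have h2 : gbar d (m+1) ≤ gbar d d := gbar_mono d (by omega)
  omega

end MRK

open MRK in
/-- Let `r` be the rank function of a matroid `M` of rank `d` on `[n]`.  The vertices
(extreme points) of the polytope `B(r̄)` are exactly the points `v ∈ ℝⁿ` whose support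
is a basis `B` of `M` and whose nonzero entries comprise exactly the numbers
`1, 2, …, d`, each occurring once. -/
theorem extremePoints_basePolytope_bar {n : ℕ} (Indep : Finset (Fin n) → Prop)
    [DecidablePred Indep]
    (hempty : Indep ∅)
    (hsubset : ∀ I J, Indep J → I ⊆ J → Indep I)
    (hexchange : ∀ I J, Indep I → Indep J → I.card < J.card →
      ∃ e ∈ J \ I, Indep (insert e I))
    (d : ℕ) (hd : matroidRank Indep Finset.univ = d) (v : Fin n → ℝ) :
    v ∈ (basePolytope (polymatroidBar (matroidRank Indep) d)).extremePoints ℝ ↔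
      ∃ B : Finset (Fin n), Indep B ∧ B.card = d ∧
        (∀ i, v i ≠ 0 ↔ i ∈ B) ∧
        B.image v = (Finset.Icc 1 d).image (fun m : ℕ => (m : ℝ)) := by
  classical
  set r := matroidRank Indep with hr
  set f := polymatroidBar r d with hf
  have hfS : ∀ S, f S = gbar d (r S) := fun _ => rfl
  have hrle : ∀ S, r S ≤ d := fun S => hd ▸ rank_mono (Finset.subset_univ S)
  constructor
  · intro hv
    have hfmono : ∀ S S' : Finset (Fin n), S ⊆ S' → f S ≤ f S' := fun S S' h =>
      gbar_mono d (rank_mono h)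
    have hfsub : ∀ S S' : Finset (Fin n), f (S ∪ S') + f (S ∩ S') ≤ f S + f S' := by
      intro S S'
      rw [hfS, hfS, hfS, hfS]
      exact gbar_vals_submod (rank_mono Finset.inter_subset_left)
        (rank_mono Finset.inter_subset_right) (rank_mono Finset.subset_union_left)
        (rank_mono Finset.subset_union_right)
        (rank_submodular hempty hsubset hexchange S S')
    rw [mem_extremePoints] at hv
    obtain ⟨⟨hnn, hle, htot⟩, hext⟩ := hv
    set supp := Finset.univ.filter (fun i => v i ≠ 0) with hsuppdef
    have hsuppmem : ∀ i, v i ≠ 0 ↔ i ∈ supp := by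
      intro i
      simp [hsuppdef]
    have hvpos : ∀ i ∈ supp, 0 < v i := by
      intro i hi
      exact lt_of_le_of_ne (hnn i) (Ne.symm ((hsuppmem i).mpr hi))
    have hvz : ∀ i, i ∉ supp → v i = 0 := by
      intro i hi
      by_contra h
      exact hi ((hsuppmem i).mp h)
    set T : Finset (Fin n) → Prop := fun S => ∑ i ∈ S, v i = (f S : ℝ) with hT
    have htuniv : T Finset.univ := htot
    have hrempty : r ∅ = 0 := Nat.le_zero.mp (rank_le_card ∅)
    have htempty : T ∅ := by
      simp [hT, hfS, hrempty, gbar_zero]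
    have htui : ∀ S S', T S → T S' → T (S ∪ S') ∧ T (S ∩ S') := by
      intro S S' h1 h2
      have hsum : (∑ i ∈ S ∪ S', v i) + ∑ i ∈ S ∩ S', v i
          = (∑ i ∈ S, v i) + ∑ i ∈ S', v i := Finset.sum_union_inter
      have hsubR : (f (S ∪ S') : ℝ) + (f (S ∩ S') : ℝ) ≤ (f S : ℝ) + (f S' : ℝ) := by
        exact_mod_cast hfsub S S'
      have h3 := hle (S ∪ S')
      have h4 := hle (S ∩ S')
      rw [hT] at h1 h2 ⊢
      constructor <;> linarith
    have htsupp : ∀ S, T S → T (S ∩ supp) ∧ f (S ∩ supp) = f S := by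
      intro S hS
      have hsum : (∑ i ∈ S ∩ supp, v i) = ∑ i ∈ S, v i := by
        apply Finset.sum_subset Finset.inter_subset_left
        intro i hi hni
        exact hvz i (fun hs => hni (Finset.mem_inter.mpr ⟨hi, hs⟩))
      have hm : f (S ∩ supp) ≤ f S := hfmono _ _ Finset.inter_subset_left
      have hl := hle (S ∩ supp)
      rw [hT] at hS
      have hfeq : f (S ∩ supp) = f S := by
        have h1 : (f S : ℝ) ≤ (f (S ∩ supp) : ℝ) := by
          rw [← hS, ← hsum]
          exact hl
        have h2 : (f S : ℕ) ≤ f (S ∩ supp) := by exact_mod_cast h1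
        omega
      refine ⟨?_, hfeq⟩
      show (∑ i ∈ S ∩ supp, v i) = (f (S ∩ supp) : ℝ)
      rw [hsum, hS, hfeq]
    have hTsupp : T supp := by
      have := (htsupp Finset.univ htuniv).1
      rwa [Finset.univ_inter] at this
    -- separation of support elements by tight sets
    have hsep : ∀ i ∈ supp, ∀ j ∈ supp, i ≠ j →
        ∃ W, T W ∧ ((i ∈ W ∧ j ∉ W) ∨ (j ∈ W ∧ i ∉ W)) := by
      intro i hi j hj hne
      by_contra hno
      push_neg at hno
      have hiff : ∀ W, T W → (i ∈ W ↔ j ∈ W) := by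
        intro W hW
        have := hno W hW
        by_cases h1 : i ∈ W <;> by_cases h2 : j ∈ W <;> tauto
      have hionly : ¬ T {i} := by
        intro h
        have := (hiff _ h).mp (Finset.mem_singleton_self i)
        rw [Finset.mem_singleton] at this
        exact hne this.symm
      have hne𝒮 : (Finset.univ.filter (fun S : Finset (Fin n) => ¬ T S)).Nonempty :=
        ⟨{i}, by simp [hionly]⟩
      obtain ⟨S₀, hS₀, hminS⟩ := Finset.exists_min_image _
        (fun S => (f S : ℝ) - ∑ k ∈ S, v k) hne𝒮
      have hS₀nt : ¬ T S₀ := by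
        simp only [Finset.mem_filter] at hS₀
        exact hS₀.2
      have hδ : ∀ S : Finset (Fin n), ¬ T S →
          (f S₀ : ℝ) - ∑ k ∈ S₀, v k ≤ (f S : ℝ) - ∑ k ∈ S, v k := by
        intro S hS
        exact hminS S (by simp [hS])
      have hδ0 : 0 < (f S₀ : ℝ) - ∑ k ∈ S₀, v k := by
        have h1 := hle S₀
        have h2 : (∑ k ∈ S₀, v k) ≠ (f S₀ : ℝ) := hS₀nt
        have := lt_of_le_of_ne h1 h2
        linarith
      set ε := min (min (v i) (v j)) ((f S₀ : ℝ) - ∑ k ∈ S₀, v k) with hεdef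
      have hε : 0 < ε := lt_min (lt_min (hvpos i hi) (hvpos j hj)) hδ0
      have hεδ : ∀ S : Finset (Fin n), ¬ T S → ε ≤ (f S : ℝ) - ∑ k ∈ S, v k := by
        intro S hS
        exact le_trans (min_le_right _ _) (hδ S hS)
      have hpert : ∀ (p q : Fin n), p ≠ q → (∀ W, T W → (p ∈ W ↔ q ∈ W)) → ε ≤ v q →
          (fun k => v k + (if k = p then ε else if k = q then -ε else 0)) ∈ basePolytope f := by
        intro p q hpq hWpq hεq
        have hsplit : ∀ S : Finset (Fin n),
            (∑ k ∈ S, (v k + (if k = p then ε else if k = q then -ε else 0)))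
            = (∑ k ∈ S, v k) + ((if p ∈ S then ε else 0) + (if q ∈ S then -ε else 0)) := by
          intro S
          rw [Finset.sum_add_distrib]
          congr 1
          have hw : ∀ k, (if k = p then ε else if k = q then -ε else 0)
              = (if k = p then ε else 0) + (if k = q then -ε else 0) := by
            intro k
            by_cases h1 : k = p
            · subst h1
              simp [hpq]
            · by_cases h2 : k = q
              · subst h2
                simp [h1]
              · simp [h1, h2]
          rw [Finset.sum_congr rfl (fun k _ => hw k), Finset.sum_add_distrib,
            Finset.sum_ite_eq' S p (fun _ => ε), Finset.sum_ite_eq' S q (fun _ => -ε)]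
        refine ⟨?_, ?_, ?_⟩
        · intro k
          show 0 ≤ v k + (if k = p then ε else if k = q then -ε else 0)
          by_cases h1 : k = p
          · subst h1
            rw [if_pos rfl]
            linarith [hnn k]
          · by_cases h2 : k = q
            · subst h2
              rw [if_neg h1, if_pos rfl]
              linarith [hnn k]
            · rw [if_neg h1, if_neg h2]
              linarith [hnn k]
        · intro S
          rw [hsplit S]
          by_cases hTS : T S
          · have hiffS := hWpq S hTS
            rw [hT] at hTS
            by_cases hp : p ∈ S
            · have hq : q ∈ S := hiffS.mp hp
              rw [if_pos hp, if_pos hq]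
              linarith
            · have hq : q ∉ S := fun h => hp (hiffS.mpr h)
              rw [if_neg hp, if_neg hq]
              linarith
          · have hslack := hεδ S hTS
            have hterm : (if p ∈ S then ε else 0) + (if q ∈ S then -ε else 0) ≤ ε := by
              split_ifs <;> linarith
            linarith
        · rw [hsplit Finset.univ, if_pos (Finset.mem_univ p), if_pos (Finset.mem_univ q)]
          rw [hT] at htuniv
          rw [htuniv]
          ring
      have hx := hpert i j hne hiff
        (le_trans (min_le_left _ _) (min_le_right _ _))
      have hy := hpert j i hne.symm (fun W hW => (hiff W hW).symm)
        (le_trans (min_le_left _ _) (min_le_left _ _))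
      have hseg : v ∈ openSegment ℝ
          (fun k => v k + (if k = i then ε else if k = j then -ε else 0))
          (fun k => v k + (if k = j then ε else if k = i then -ε else 0)) := by
        refine ⟨1/2, 1/2, by norm_num, by norm_num, by norm_num, ?_⟩
        have hAB : ∀ k : Fin n, (if k = i then ε else if k = j then -ε else 0)
            + (if k = j then ε else if k = i then -ε else 0) = 0 := by
          intro k
          by_cases h1 : k = i
          · subst h1
            rw [if_pos rfl, if_neg hne, if_pos rfl]
            ring
          · by_cases h2 : k = j
            · subst h2
              rw [if_neg h1, if_pos rfl, if_pos rfl]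
              ring
            · rw [if_neg h1, if_neg h2, if_neg h2, if_neg h1]
              ring
        funext k
        simp only [Pi.add_apply, Pi.smul_apply, smul_eq_mul]
        linarith [hAB k]
      obtain ⟨hxv, -⟩ := hext _ hx _ hy hseg
      have h2 : v i + ε = v i := by
        have h3 := congrFun hxv i
        rw [if_pos rfl] at h3
        exact h3
      linarith
    -- augmentation
    have haug : ∀ C, C ⊆ supp → T C → C ≠ supp →
        ∃ x, x ∉ C ∧ x ∈ supp ∧ T (insert x C) := by
      intro C hCs hTC hCne
      have hD1 : supp ∈ supp.powerset.filter (fun D => T D ∧ C ⊂ D) := by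
        simp only [Finset.mem_filter, Finset.mem_powerset]
        exact ⟨le_refl _, hTsupp, lt_of_le_of_ne hCs hCne⟩
      obtain ⟨D, hDmem, hDmin⟩ := Finset.exists_min_image _ Finset.card ⟨supp, hD1⟩
      simp only [Finset.mem_filter, Finset.mem_powerset] at hDmem
      obtain ⟨hDsupp, hTD, hCD⟩ := hDmem
      by_cases hone : (D \ C).card = 1
      · obtain ⟨x, hx⟩ := Finset.card_eq_one.mp hone
        have hxmem : x ∈ D \ C := hx ▸ Finset.mem_singleton_self x
        rw [Finset.mem_sdiff] at hxmem
        have hDins : D = insert x C := by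
          have h1 : C ∪ D \ C = D := Finset.union_sdiff_of_subset hCD.subset
          rw [hx] at h1
          rw [← h1, Finset.insert_eq, Finset.union_comm]
        exact ⟨x, hxmem.2, hDsupp hxmem.1, hDins ▸ hTD⟩
      · exfalso
        have hlt : 1 < (D \ C).card := by
          have : (D \ C).Nonempty := by
            obtain ⟨x, hx1, hx2⟩ := Finset.exists_of_ssubset hCD
            exact ⟨x, Finset.mem_sdiff.mpr ⟨hx1, hx2⟩⟩
          have := Finset.card_pos.mpr this
          omega
        obtain ⟨i', hi', j', hj', hij⟩ := Finset.one_lt_card.mp hlt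
        rw [Finset.mem_sdiff] at hi' hj'
        obtain ⟨W, hTW, hWc⟩ := hsep i' (hDsupp hi'.1) j' (hDsupp hj'.1) hij
        have hTW' : T (W ∩ supp) := (htsupp W hTW).1
        have key : ∀ p q : Fin n, p ∈ D → p ∉ C → q ∈ D → q ∉ C →
            p ∈ W → q ∉ W → False := by
          intro p q hpD hpC hqD hqC hpW hqW
          set E := C ∪ ((W ∩ supp) ∩ D) with hE
          have hTE : T E := (htui _ _ hTC (htui (W ∩ supp) D hTW' hTD).2).1
          have hEsupp : E ⊆ supp := Finset.union_subset hCs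
            ((Finset.inter_subset_left).trans Finset.inter_subset_right)
          have hpE : p ∈ E := by
            rw [hE]
            apply Finset.mem_union_right
            exact Finset.mem_inter.mpr ⟨Finset.mem_inter.mpr ⟨hpW, hDsupp hpD⟩, hpD⟩
          have hCE : C ⊂ E := by
            refine lt_of_le_of_ne Finset.subset_union_left ?_
            intro h
            rw [← h] at hpE
            exact hpC hpE
          have hED : E ⊆ D := Finset.union_subset hCD.subset Finset.inter_subset_right
          have hqE : q ∉ E := by
            rw [hE]
            intro h
            rcases Finset.mem_union.mp h with h | h
            · exact hqC h
            · exact hqW (Finset.mem_inter.mp (Finset.mem_inter.mp h).1).1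
          have hEltD : E.card < D.card :=
            Finset.card_lt_card (lt_of_le_of_ne hED (fun h => hqE (h ▸ hqD)))
          have hE𝒟 : E ∈ supp.powerset.filter (fun D => T D ∧ C ⊂ D) := by
            simp only [Finset.mem_filter, Finset.mem_powerset]
            exact ⟨hEsupp, hTE, hCE⟩
          exact absurd (hDmin E hE𝒟) (not_le.mpr hEltD)
        rcases hWc with ⟨h1, h2⟩ | ⟨h1, h2⟩
        · exact key i' j' hi'.1 hi'.2 hj'.1 hj'.2 h1 h2
        · exact key j' i' hj'.1 hj'.2 hi'.1 hi'.2 h1 h2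
    -- chain construction
    have hchain : ∀ t, t ≤ supp.card → ∃ C, C ⊆ supp ∧ T C ∧ C.card = t ∧ r C = t ∧
        C.image v = (Finset.Icc (d - t + 1) d).image (fun m : ℕ => (m : ℝ)) := by
      intro t
      induction t with
      | zero =>
        intro _
        refine ⟨∅, Finset.empty_subset _, htempty, Finset.card_empty, hrempty, ?_⟩
        have : Finset.Icc (d - 0 + 1) d = ∅ := by
          rw [Finset.Icc_eq_empty_iff]
          omega
        simp [this]
      | succ t ih =>
        intro ht
        obtain ⟨C, hCs, hTC, hCcard, hCr, hCimg⟩ := ih (by omega)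
        have hCne : C ≠ supp := by
          intro h
          rw [h] at hCcard
          omega
        obtain ⟨x, hxC, hxs, hTC'⟩ := haug C hCs hTC hCne
        have hC'card : (insert x C).card = t + 1 := by
          rw [Finset.card_insert_of_notMem hxC, hCcard]
        have hsum' : (∑ k ∈ insert x C, v k) = v x + ∑ k ∈ C, v k :=
          Finset.sum_insert hxC
        have hvx : 0 < v x := hvpos x hxs
        have hr2 : r (insert x C) ≤ t + 1 := hC'card ▸ rank_le_card (insert x C)
        have hr1 : t ≤ r (insert x C) := hCr ▸ rank_mono (Finset.subset_insert x C)
        have hrC' : r (insert x C) = t + 1 := by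
          by_contra h
          have hreq : r (insert x C) = t := by omega
          have hfe : (f (insert x C) : ℝ) = f C := by
            rw [hfS, hfS, hreq, hCr]
          rw [hT] at hTC hTC'
          rw [hsum', hfe, hTC] at hTC'
          linarith
        have htd : t + 1 ≤ d := hrC' ▸ hrle (insert x C)
        have hvxval : v x = ((d - t : ℕ) : ℝ) := by
          have e1 : (gbar d (t + 1) : ℕ) = gbar d t + (d - t) := gbar_step (by omega)
          rw [hT] at hTC hTC'
          rw [hsum', hTC, hfS, hfS, hrC', hCr, e1] at hTC'
          push_cast at hTC' ⊢
          linarith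
        have himg' : (insert x C).image v
            = (Finset.Icc (d - (t+1) + 1) d).image (fun m : ℕ => (m : ℝ)) := by
          rw [Finset.image_insert, hCimg, hvxval]
          have hIcc : Finset.Icc (d - (t+1) + 1) d = insert (d - t) (Finset.Icc (d - t + 1) d) := by
            ext m
            simp only [Finset.mem_Icc, Finset.mem_insert]
            omega
          rw [hIcc, Finset.image_insert]
        exact ⟨insert x C, Finset.insert_subset hxs hCs, hTC', hC'card, hrC', himg'⟩
    obtain ⟨C, hCs, hTC2, hCcard, hCr, hCimg⟩ := hchain supp.card (le_refl _)
    have hCsupp : C = supp := Finset.eq_of_subset_of_card_le hCs (le_of_eq hCcard.symm)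
    have hfsu : f C = f Finset.univ := by
      have h2 := (htsupp Finset.univ htuniv).2
      rw [Finset.univ_inter] at h2
      rw [hCsupp]
      exact h2
    have hm : r C = d := by
      apply gbar_strict (hrle C)
      have e1 : f C = gbar d (r C) := hfS C
      have e2 : f Finset.univ = gbar d d := by rw [hfS, hd]
      rw [← e1, ← e2]
      exact hfsu
    have hcard2 : C.card = d := by omega
    refine ⟨C, ?_, hcard2, ?_, ?_⟩
    · refine indep_of_rank_eq_card hempty ?_
      show r C = C.card
      rw [hm, hcard2]
    · intro i
      rw [hCsupp]
      exact hsuppmem i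
    · rw [hCimg]
      have he : d - supp.card + 1 = 1 := by omega
      rw [he]
  · rintro ⟨B, hBi, hBd, hsupp, himg⟩
    have hcastinj : Function.Injective (fun m : ℕ => (m : ℝ)) := Nat.cast_injective
    have hinj : Set.InjOn v ↑B := by
      rw [← Finset.card_image_iff, himg, Finset.card_image_of_injective _ hcastinj,
        Nat.card_Icc, hBd]
      omega
    have hzero : ∀ i, i ∉ B → v i = 0 := by
      intro i hi
      by_contra h
      exact hi ((hsupp i).mp h)
    have hmem : ∀ i ∈ B, ∃ m, 1 ≤ m ∧ m ≤ d ∧ v i = (m:ℝ) := by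
      intro i hi
      have : v i ∈ B.image v := Finset.mem_image_of_mem v hi
      rw [himg] at this
      obtain ⟨m, hm, hv⟩ := Finset.mem_image.mp this
      simp only [Finset.mem_Icc] at hm
      exact ⟨m, hm.1, hm.2, hv.symm⟩
    have hpos : ∀ i ∈ B, (1:ℝ) ≤ v i := by
      intro i hi
      obtain ⟨m, hm1, _, hv⟩ := hmem i hi
      rw [hv]
      exact_mod_cast hm1
    have hnn : ∀ i, 0 ≤ v i := by
      intro i
      by_cases hi : i ∈ B
      · linarith [hpos i hi]
      · rw [hzero i hi]
    -- sum over any subset of B is the cast of a natural sum over a subset of Icc 1 d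
    have hsumS : ∀ S : Finset (Fin n), S ⊆ B → ∃ A : Finset ℕ, A ⊆ Finset.Icc 1 d ∧
        A.card = S.card ∧ (∑ i ∈ S, v i) = ((∑ a ∈ A, a : ℕ) : ℝ) ∧
        S.image v = A.image (fun m : ℕ => (m:ℝ)) := by
      intro S hSB
      set A : Finset ℕ := (Finset.Icc 1 d).filter (fun m => (m:ℝ) ∈ S.image v) with hA
      have himg2 : S.image v = A.image (fun m : ℕ => (m:ℝ)) := by
        ext x
        simp only [Finset.mem_image, hA, Finset.mem_filter]
        constructor
        · rintro ⟨i, hiS, rfl⟩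
          obtain ⟨m, hm1, hm2, hv⟩ := hmem i (hSB hiS)
          exact ⟨m, ⟨Finset.mem_Icc.mpr ⟨hm1, hm2⟩, ⟨i, hiS, hv⟩⟩, hv.symm⟩
        · rintro ⟨m, ⟨_, ⟨i, hiS, hv⟩⟩, rfl⟩
          exact ⟨i, hiS, hv⟩
      have hinjS : ∀ i ∈ S, ∀ j ∈ S, v i = v j → i = j := fun i hi j hj =>
        hinj (hSB hi) (hSB hj)
      have hcard : A.card = S.card := by
        rw [← Finset.card_image_of_injective A hcastinj, ← himg2,
          Finset.card_image_iff.mpr hinjS]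
      refine ⟨A, Finset.filter_subset _ _, hcard, ?_, himg2⟩
      calc ∑ i ∈ S, v i = ∑ z ∈ S.image v, z := (Finset.sum_image (f := fun z : ℝ => z) (g := v) hinjS).symm
        _ = ∑ m ∈ A, ((m:ℕ):ℝ) := by
            rw [himg2]
            exact Finset.sum_image (fun a _ b _ h => hcastinj h)
        _ = ((∑ a ∈ A, a : ℕ) : ℝ) := (Nat.cast_sum A _).symm
    -- reduction of sums to B
    have hredB : ∀ S : Finset (Fin n), (∑ i ∈ S ∩ B, v i) = ∑ i ∈ S, v i := by
      intro S
      apply Finset.sum_subset Finset.inter_subset_left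
      intro i hiS hiI
      exact hzero i (fun hiB => hiI (Finset.mem_inter.mpr ⟨hiS, hiB⟩))
    have hmemP : v ∈ basePolytope f := by
      refine ⟨hnn, ?_, ?_⟩
      · intro S
        rw [← hredB S]
        obtain ⟨A, hA1, hA2, hA3, _⟩ := hsumS (S ∩ B) Finset.inter_subset_right
        rw [hA3]
        have h1 : (∑ a ∈ A, a) ≤ gbar d A.card := sum_subset_le d A hA1
        have h2 : (S ∩ B).card ≤ r S := rank_ge_of_indep
          (hsubset _ B hBi Finset.inter_subset_right) Finset.inter_subset_left
        have h3 : gbar d A.card ≤ gbar d (r S) := gbar_mono d (by omega)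
        rw [hfS S]
        exact_mod_cast le_trans h1 h3
      · have huB : (∑ i ∈ Finset.univ ∩ B, v i) = ∑ i, v i := hredB Finset.univ
        rw [Finset.univ_inter] at huB
        rw [← huB]
        obtain ⟨A, hA1, hA2, hA3, _⟩ := hsumS B (le_refl _)
        have hAeq : A = Finset.Icc 1 d := by
          apply Finset.eq_of_subset_of_card_le hA1
          rw [hA2, hBd, Nat.card_Icc]
          omega
        have hsum : (∑ a ∈ A, a) = gbar d d := by
          rw [hAeq]
          have := sum_top_eq d d (le_refl d)
          rwa [Nat.sub_self] at this
        rw [hA3, hsum, hfS, hd]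
    rw [mem_extremePoints]
    refine ⟨hmemP, ?_⟩
    intro x hx y hy hseg
    obtain ⟨a, b, ha, hb, hab, hvseg⟩ := hseg
    have hvp : ∀ k, a * x k + b * y k = v k := by
      intro k
      have := congrFun hvseg k
      simpa using this
    obtain ⟨hxnn, hxle, hxtot⟩ := hx
    obtain ⟨hynn, hyle, hytot⟩ := hy
    have hsumv : ∀ S : Finset (Fin n),
        a * (∑ i ∈ S, x i) + b * (∑ i ∈ S, y i) = ∑ i ∈ S, v i := by
      intro S
      rw [Finset.mul_sum, Finset.mul_sum, ← Finset.sum_add_distrib]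
      exact Finset.sum_congr rfl fun k _ => hvp k
    have hout : ∀ i, i ∉ B → x i = 0 ∧ y i = 0 := by
      intro i hi
      exact seg_zero ha hb hab (hxnn i) (hynn i) (by rw [hvp i, hzero i hi])
    -- the level sets
    set N : ℕ → Finset (Fin n) := fun m => B.filter (fun i => (m:ℝ) ≤ v i) with hN
    have hNB : ∀ m, N m ⊆ B := fun m => Finset.filter_subset _ _
    have hNimg : ∀ m, 1 ≤ m → (N m).image v
        = (Finset.Icc m d).image (fun j : ℕ => (j:ℝ)) := by
      intro m hm
      ext z
      simp only [Finset.mem_image, hN, Finset.mem_filter, Finset.mem_Icc]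
      constructor
      · rintro ⟨i, ⟨hiB, hvi⟩, rfl⟩
        obtain ⟨m', h1, h2, hveq⟩ := hmem i hiB
        refine ⟨m', ⟨?_, h2⟩, hveq.symm⟩
        rw [hveq] at hvi
        exact_mod_cast hvi
      · rintro ⟨j, ⟨hj1, hj2⟩, rfl⟩
        have : (j:ℝ) ∈ B.image v := by
          rw [himg]
          exact Finset.mem_image_of_mem _ (Finset.mem_Icc.mpr ⟨le_trans hm hj1, hj2⟩)
        obtain ⟨i, hiB, hvi⟩ := Finset.mem_image.mp this
        exact ⟨i, ⟨hiB, by rw [hvi]; exact_mod_cast hj1⟩, hvi⟩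
    have hNcard : ∀ m, 1 ≤ m → (N m).card = d + 1 - m := by
      intro m hm
      have h1 : ((N m).image v).card = (N m).card :=
        Finset.card_image_iff.mpr (fun i hi j hj => hinj (hNB m hi) (hNB m hj))
      rw [hNimg m hm, Finset.card_image_of_injective _ hcastinj, Nat.card_Icc] at h1
      omega
    have hNval : ∀ m, 1 ≤ m → (f (N m) : ℝ) = (gbar d (d + 1 - m) : ℕ) := by
      intro m hm
      have hind : Indep (N m) := hsubset _ B hBi (hNB m)
      have : r (N m) = (N m).card := rank_indep hind
      rw [hfS, this, hNcard m hm]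
    have hNsum : ∀ m, 1 ≤ m → (∑ i ∈ N m, v i) = ((gbar d (d + 1 - m) : ℕ) : ℝ) := by
      intro m hm
      obtain ⟨A, hA1, hA2, hA3, hA4⟩ := hsumS (N m) (hNB m)
      have hAeq : A = Finset.Icc m d := by
        have h5 : A.image (fun m : ℕ => (m:ℝ)) = (Finset.Icc m d).image (fun j : ℕ => (j:ℝ)) := by
          rw [← hA4, hNimg m hm]
        apply Finset.image_injective hcastinj h5
      rw [hA3, hAeq]
      norm_cast
      by_cases hmd : m ≤ d
      · have ht : d + 1 - m ≤ d := by omega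
        have := sum_top_eq d (d + 1 - m) ht
        have harg : d - (d + 1 - m) + 1 = m := by omega
        rwa [harg] at this
      · have h0 : Finset.Icc m d = ∅ := by
          rw [Finset.Icc_eq_empty_iff]
          omega
        have h1 : d + 1 - m = 0 := by omega
        rw [h0, h1, gbar_zero]
        simp
    have hE : ∀ m, 1 ≤ m → (∑ i ∈ N m, x i) = ((gbar d (d + 1 - m) : ℕ) : ℝ)
        ∧ (∑ i ∈ N m, y i) = ((gbar d (d + 1 - m) : ℕ) : ℝ) := by
      intro m hm
      have h1 : (∑ i ∈ N m, x i) ≤ ((gbar d (d + 1 - m) : ℕ) : ℝ) := by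
        rw [← hNval m hm]; exact hxle (N m)
      have h2 : (∑ i ∈ N m, y i) ≤ ((gbar d (d + 1 - m) : ℕ) : ℝ) := by
        rw [← hNval m hm]; exact hyle (N m)
      have h3 := hsumv (N m)
      rw [hNsum m hm] at h3
      exact seg_eq ha hb hab h1 h2 h3
    have hinB : ∀ i ∈ B, x i = v i ∧ y i = v i := by
      intro i hiB
      obtain ⟨m, hm1, hm2, hveq⟩ := hmem i hiB
      have hnotin : i ∉ N (m+1) := by
        simp only [hN, Finset.mem_filter, hveq, not_and]
        intro _ h
        have : m + 1 ≤ m := by exact_mod_cast h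
        omega
      have hins : N m = insert i (N (m+1)) := by
        ext j
        simp only [hN, Finset.mem_filter, Finset.mem_insert]
        constructor
        · rintro ⟨hjB, hjv⟩
          obtain ⟨m', h1, h2, hveq'⟩ := hmem j hjB
          have hmm' : m ≤ m' := by
            rw [hveq'] at hjv
            exact_mod_cast hjv
          by_cases hcase : m' = m
          · left
            apply hinj hjB hiB
            rw [hveq, hveq', hcase]
          · right
            refine ⟨hjB, ?_⟩
            rw [hveq']
            have : m + 1 ≤ m' := by omega
            exact_mod_cast this
        · rintro (rfl | ⟨hjB, hjv⟩)
          · exact ⟨hiB, by rw [hveq]⟩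
          · exact ⟨hjB, le_trans (by exact_mod_cast Nat.le_succ m) hjv⟩
      have hstep : (gbar d (d + 1 - m) : ℕ) = gbar d (d + 1 - (m+1)) + m := by
        have h1 : d - m < d := by omega
        have h2 : d + 1 - m = (d - m) + 1 := by omega
        have h3 : d + 1 - (m + 1) = d - m := by omega
        rw [h2, h3, gbar_step h1]
        omega
      have hx1 := (hE m hm1).1
      have hx2 := (hE (m+1) (by omega)).1
      have hy1 := (hE m hm1).2
      have hy2 := (hE (m+1) (by omega)).2
      rw [hins, Finset.sum_insert hnotin] at hx1 hy1
      rw [hx2] at hx1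
      rw [hy2] at hy1
      rw [hstep] at hx1 hy1
      push_cast at hx1 hy1
      constructor
      · rw [hveq]; linarith
      · rw [hveq]; linarith
    constructor
    · funext i
      by_cases hi : i ∈ B
      · exact (hinB i hi).1
      · rw [(hout i hi).1, hzero i hi]
    · funext i
      by_cases hi : i ∈ B
      · exact (hinB i hi).2
      · rw [(hout i hi).2, hzero i hi]
end

section
/- Let r be a polymatroid on [n] of rank d. Then the base polytope of r̄ is the Minkowski sum of the base polytopes of the truncations: B(r̄) = B(r_0) + B(r_1) + ⋯ + B(r_d) as subsets of ℝ^n. -/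
open Pointwise

namespace PolyAux

variable {n : ℕ}

/-- The chain set: first `i` elements in the order given by `σ`. -/
def chain (σ : Equiv.Perm (Fin n)) (i : ℕ) : Finset (Fin n) :=
  Finset.univ.filter fun j => (σ.symm j : ℕ) < i

lemma mem_chain {σ : Equiv.Perm (Fin n)} {i : ℕ} {j : Fin n} :
    j ∈ chain σ i ↔ (σ.symm j : ℕ) < i := by simp [chain]

lemma chain_zero (σ : Equiv.Perm (Fin n)) : chain σ 0 = ∅ := by
  ext j; simp [mem_chain]

lemma chain_univ (σ : Equiv.Perm (Fin n)) {i : ℕ} (h : n ≤ i) : chain σ i = Finset.univ := by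
  ext j
  simp only [mem_chain, Finset.mem_univ, iff_true]
  exact lt_of_lt_of_le (σ.symm j).isLt h

lemma chain_mono (σ : Equiv.Perm (Fin n)) {i i' : ℕ} (h : i ≤ i') : chain σ i ⊆ chain σ i' :=
  fun j hj => mem_chain.2 (lt_of_lt_of_le (mem_chain.1 hj) h)

lemma not_mem_chain (σ : Equiv.Perm (Fin n)) (i : Fin n) : σ i ∉ chain σ (i : ℕ) := by
  simp [mem_chain]

lemma chain_succ (σ : Equiv.Perm (Fin n)) (i : Fin n) :
    chain σ ((i : ℕ) + 1) = insert (σ i) (chain σ (i : ℕ)) := by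
  ext j
  simp only [mem_chain, Finset.mem_insert, Nat.lt_succ_iff_lt_or_eq]
  constructor
  · rintro (h | h)
    · exact Or.inr h
    · left
      have : σ.symm j = i := Fin.ext h
      rw [← this, Equiv.apply_symm_apply]
  · rintro (h | h)
    · right; rw [h, Equiv.symm_apply_apply]
    · exact Or.inl h

/-- The greedy vertex of the base polytope of `f` associated to the ordering `σ`. -/
noncomputable def gv (f : Finset (Fin n) → ℕ) (σ : Equiv.Perm (Fin n)) (j : Fin n) : ℝ :=
  (f (chain σ ((σ.symm j : ℕ) + 1)) : ℝ) - (f (chain σ ((σ.symm j : ℕ))) : ℝ)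

lemma gv_apply (f : Finset (Fin n) → ℕ) (σ : Equiv.Perm (Fin n)) (i : Fin n) :
    gv f σ (σ i) = (f (chain σ ((i : ℕ) + 1)) : ℝ) - (f (chain σ (i : ℕ)) : ℝ) := by
  simp [gv]


lemma gv_nonneg (f : Finset (Fin n) → ℕ) (hf : IsPolymatroid f) (σ : Equiv.Perm (Fin n))
    (j : Fin n) : 0 ≤ gv f σ j := by
  have h := hf.2.1 _ _ (chain_mono σ (Nat.le_succ ((σ.symm j : ℕ))))
  have : (f (chain σ ((σ.symm j : ℕ))) : ℝ) ≤ f (chain σ ((σ.symm j : ℕ) + 1)) := by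
    exact_mod_cast h
  simp only [gv, sub_nonneg]
  exact this

lemma sum_gv_le (f : Finset (Fin n) → ℕ) (hf : IsPolymatroid f) (σ : Equiv.Perm (Fin n))
    (S : Finset (Fin n)) : ∑ j ∈ S, gv f σ j ≤ (f S : ℝ) := by
  classical
  have key : ∀ i : Fin n, (if σ i ∈ S then gv f σ (σ i) else 0)
      ≤ (f (S ∩ chain σ ((i : ℕ) + 1)) : ℝ) - (f (S ∩ chain σ (i : ℕ)) : ℝ) := by
    intro i
    by_cases h : σ i ∈ S
    · simp only [h, if_true, gv_apply]
      have hsub := hf.2.2 (S ∩ chain σ ((i : ℕ) + 1)) (chain σ (i : ℕ))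
      have h1 : (S ∩ chain σ ((i : ℕ) + 1)) ∪ chain σ (i : ℕ) = chain σ ((i : ℕ) + 1) := by
        rw [chain_succ]
        ext j
        simp only [Finset.mem_union, Finset.mem_inter, Finset.mem_insert]
        constructor
        · rintro (⟨_, hj⟩ | hj)
          · exact hj
          · exact Or.inr hj
        · rintro (hj | hj)
          · exact Or.inl ⟨hj ▸ h, Or.inl hj⟩
          · exact Or.inr hj
      have h2 : (S ∩ chain σ ((i : ℕ) + 1)) ∩ chain σ (i : ℕ) = S ∩ chain σ (i : ℕ) := by
        rw [Finset.inter_assoc, Finset.inter_eq_right.2 (chain_mono σ (Nat.le_succ _))]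
      rw [h1, h2] at hsub
      have hcast : (f (chain σ ((i : ℕ) + 1)) : ℝ) + (f (S ∩ chain σ (i : ℕ)) : ℝ)
          ≤ (f (S ∩ chain σ ((i : ℕ) + 1)) : ℝ) + (f (chain σ (i : ℕ)) : ℝ) := by
        exact_mod_cast hsub
      linarith
    · simp only [h, if_false]
      have heq : S ∩ chain σ ((i : ℕ) + 1) = S ∩ chain σ (i : ℕ) := by
        rw [chain_succ]
        ext j
        simp only [Finset.mem_inter, Finset.mem_insert]
        constructor
        · rintro ⟨hjS, hj | hj⟩
          · exact absurd (hj ▸ hjS) h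
          · exact ⟨hjS, hj⟩
        · rintro ⟨hjS, hj⟩
          exact ⟨hjS, Or.inr hj⟩
      rw [heq]
      simp
  calc ∑ j ∈ S, gv f σ j = ∑ j : Fin n, (if j ∈ S then gv f σ j else 0) := by
        rw [Finset.sum_ite_mem, Finset.univ_inter]
    _ = ∑ i : Fin n, (if σ i ∈ S then gv f σ (σ i) else 0) :=
        (Equiv.sum_comp σ (fun j => if j ∈ S then gv f σ j else 0)).symm
    _ ≤ ∑ i : Fin n, ((f (S ∩ chain σ ((i : ℕ) + 1)) : ℝ) - (f (S ∩ chain σ (i : ℕ)) : ℝ)) :=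
        Finset.sum_le_sum fun i _ => key i
    _ = ∑ i ∈ Finset.range n, ((f (S ∩ chain σ (i + 1)) : ℝ) - (f (S ∩ chain σ i) : ℝ)) :=
        Fin.sum_univ_eq_sum_range (fun i => (f (S ∩ chain σ (i + 1)) : ℝ) - (f (S ∩ chain σ i) : ℝ)) n
    _ = (f (S ∩ chain σ n) : ℝ) - (f (S ∩ chain σ 0) : ℝ) :=
        Finset.sum_range_sub (fun i => (f (S ∩ chain σ i) : ℝ)) n
    _ ≤ (f S : ℝ) := by
        rw [chain_univ σ le_rfl, chain_zero, Finset.inter_univ, Finset.inter_empty, hf.1]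
        simp

lemma sum_gv (f : Finset (Fin n) → ℕ) (hf0 : f ∅ = 0) (σ : Equiv.Perm (Fin n)) :
    ∑ j, gv f σ j = (f Finset.univ : ℝ) := by
  calc ∑ j, gv f σ j = ∑ i : Fin n, gv f σ (σ i) := (Equiv.sum_comp σ (gv f σ)).symm
    _ = ∑ i ∈ Finset.range n, ((f (chain σ (i + 1)) : ℝ) - (f (chain σ i) : ℝ)) := by
        simp_rw [gv_apply]
        exact Fin.sum_univ_eq_sum_range (fun i => (f (chain σ (i + 1)) : ℝ) - (f (chain σ i) : ℝ)) n
    _ = (f (chain σ n) : ℝ) - (f (chain σ 0) : ℝ) :=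
        Finset.sum_range_sub (fun i => (f (chain σ i) : ℝ)) n
    _ = (f Finset.univ : ℝ) := by
        rw [chain_univ σ le_rfl, chain_zero, hf0]
        simp

lemma gv_mem (f : Finset (Fin n) → ℕ) (hf : IsPolymatroid f) (σ : Equiv.Perm (Fin n)) :
    gv f σ ∈ basePolytope f :=
  ⟨gv_nonneg f hf σ, sum_gv_le f hf σ, sum_gv f hf.1 σ⟩


lemma abel_identity (e p : ℕ → ℝ) (m : ℕ) :
    ∑ i ∈ Finset.range m, e i * (p (i + 1) - p i)
      = (∑ i ∈ Finset.range m, (e i - e (i + 1)) * p (i + 1)) + e m * p m - e 0 * p 0 := by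
  induction m with
  | zero => simp
  | succ m ih =>
      rw [Finset.sum_range_succ, Finset.sum_range_succ, ih]
      ring

lemma dot_le_gv (f : Finset (Fin n) → ℕ) (hf : IsPolymatroid f) {x : Fin n → ℝ}
    (hx : x ∈ basePolytope f) (c : Fin n → ℝ) (σ : Equiv.Perm (Fin n))
    (hσ : ∀ i i' : Fin n, i ≤ i' → c (σ i') ≤ c (σ i)) :
    ∑ j, c j * x j ≤ ∑ j, c j * gv f σ j := by
  classical
  set e : ℕ → ℝ := fun i => if h : i < n then c (σ ⟨i, h⟩) else 0 with he
  set p : ℕ → ℝ := fun i => ∑ j ∈ chain σ i, x j with hp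
  set q : ℕ → ℝ := fun i => (f (chain σ i) : ℝ) with hq
  have hx1 : ∑ j, c j * x j = ∑ i ∈ Finset.range n, e i * (p (i + 1) - p i) := by
    rw [← Equiv.sum_comp σ (fun j => c j * x j),
        ← Fin.sum_univ_eq_sum_range (fun i => e i * (p (i + 1) - p i)) n]
    refine Finset.sum_congr rfl fun i _ => ?_
    have hpi : p ((i : ℕ) + 1) - p (i : ℕ) = x (σ i) := by
      simp only [hp]
      rw [chain_succ, Finset.sum_insert (not_mem_chain σ i)]
      ring
    have hei : e (i : ℕ) = c (σ i) := by
      simp only [he]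
      rw [dif_pos i.isLt]
    rw [hpi, hei]
  have hv1 : ∑ j, c j * gv f σ j = ∑ i ∈ Finset.range n, e i * (q (i + 1) - q i) := by
    rw [← Equiv.sum_comp σ (fun j => c j * gv f σ j),
        ← Fin.sum_univ_eq_sum_range (fun i => e i * (q (i + 1) - q i)) n]
    refine Finset.sum_congr rfl fun i _ => ?_
    have hei : e (i : ℕ) = c (σ i) := by
      simp only [he]
      rw [dif_pos i.isLt]
    rw [gv_apply, hei]
  have hp0 : p 0 = 0 := by simp [hp, chain_zero]
  have hq0 : q 0 = 0 := by simp [hq, chain_zero, hf.1]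
  have hpn : p n = q n := by
    simp only [hp, hq, chain_univ σ le_rfl]
    exact hx.2.2
  have term_le : ∀ i ∈ Finset.range n, (e i - e (i + 1)) * (p (i + 1) - q (i + 1)) ≤ 0 := by
    intro i hi
    rw [Finset.mem_range] at hi
    rcases lt_or_eq_of_le (Nat.succ_le_of_lt hi) with h | h
    · have hpq : p (i + 1) ≤ q (i + 1) := hx.2.1 (chain σ (i + 1))
      have hee : e (i + 1) ≤ e i := by
        simp only [he]
        rw [dif_pos hi, dif_pos h]
        exact hσ ⟨i, hi⟩ ⟨i + 1, h⟩ (by simp [Fin.mk_le_mk])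
      exact mul_nonpos_iff.2 (Or.inl ⟨by linarith, by linarith⟩)
    · have h' : i + 1 = n := h
      have hpq : p (i + 1) = q (i + 1) := by rw [h']; exact hpn
      rw [hpq]
      simp
  have identity : ∑ i ∈ Finset.range n, e i * (p (i + 1) - p i)
      - ∑ i ∈ Finset.range n, e i * (q (i + 1) - q i)
      = ∑ i ∈ Finset.range n, (e i - e (i + 1)) * (p (i + 1) - q (i + 1)) := by
    rw [abel_identity e p n, abel_identity e q n, hp0, hq0, hpn]
    have : ∑ i ∈ Finset.range n, (e i - e (i + 1)) * (p (i + 1) - q (i + 1))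
        = ∑ i ∈ Finset.range n, ((e i - e (i + 1)) * p (i + 1) - (e i - e (i + 1)) * q (i + 1)) :=
      Finset.sum_congr rfl fun i _ => by ring
    rw [this, Finset.sum_sub_distrib]
    ring
  have hsum : ∑ i ∈ Finset.range n, (e i - e (i + 1)) * (p (i + 1) - q (i + 1)) ≤ 0 :=
    Finset.sum_nonpos term_le
  rw [hx1, hv1]
  linarith


lemma convex_base (f : Finset (Fin n) → ℕ) : Convex ℝ (basePolytope f) := by
  intro x hx y hy a b ha hb hab
  refine ⟨fun i => ?_, fun S => ?_, ?_⟩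
  · have : (a • x + b • y) i = a * x i + b * y i := by
      simp [smul_eq_mul]
    rw [this]
    exact add_nonneg (mul_nonneg ha (hx.1 i)) (mul_nonneg hb (hy.1 i))
  · have : ∑ i ∈ S, (a • x + b • y) i = a * ∑ i ∈ S, x i + b * ∑ i ∈ S, y i := by
      simp only [Pi.add_apply, Pi.smul_apply, smul_eq_mul, Finset.sum_add_distrib,
        Finset.mul_sum]
    rw [this]
    calc a * ∑ i ∈ S, x i + b * ∑ i ∈ S, y i
        ≤ a * (f S : ℝ) + b * (f S : ℝ) :=
          add_le_add (mul_le_mul_of_nonneg_left (hx.2.1 S) ha)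
            (mul_le_mul_of_nonneg_left (hy.2.1 S) hb)
      _ = (f S : ℝ) := by rw [← add_mul, hab, one_mul]
  · have : ∑ i, (a • x + b • y) i = a * ∑ i, x i + b * ∑ i, y i := by
      simp only [Pi.add_apply, Pi.smul_apply, smul_eq_mul, Finset.sum_add_distrib,
        Finset.mul_sum]
    rw [this, hx.2.2, hy.2.2, ← add_mul, hab, one_mul]

lemma base_subset_hull (f : Finset (Fin n) → ℕ) (hf : IsPolymatroid f) :
    basePolytope f ⊆ convexHull ℝ (Set.range fun σ : Equiv.Perm (Fin n) => gv f σ) := by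
  intro x hx
  by_contra hmem
  have hfin : (Set.range fun σ : Equiv.Perm (Fin n) => gv f σ).Finite := Set.finite_range _
  obtain ⟨φ, u, hu1, hu2⟩ := geometric_hahn_banach_closed_point
    (convex_convexHull ℝ _) (hfin.isClosed_convexHull (𝕜 := ℝ)) hmem
  set c : Fin n → ℝ := fun j => φ (Pi.single j 1) with hc
  have hφ : ∀ y : Fin n → ℝ, φ y = ∑ j, c j * y j := by
    intro y
    have hy : y = ∑ j : Fin n, y j • (Pi.single j 1 : Fin n → ℝ) := by
      funext k
      rw [Finset.sum_apply]
      simp [Pi.single_apply]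
    conv_lhs => rw [hy]
    rw [map_sum]
    refine Finset.sum_congr rfl fun j _ => ?_
    rw [map_smul, smul_eq_mul, hc]
    ring
  set σ := Tuple.sort (fun i => -(c i)) with hσdef
  have hσ : ∀ i i' : Fin n, i ≤ i' → c (σ i') ≤ c (σ i) := by
    intro i i' h
    have := Tuple.monotone_sort (fun i => -(c i)) h
    simpa using this
  have h1 : φ x ≤ φ (gv f σ) := by
    rw [hφ, hφ]
    exact dot_le_gv f hf hx c σ hσ
  have h2 : φ (gv f σ) < u := hu1 _ (subset_convexHull ℝ _ ⟨σ, rfl⟩)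
  linarith

lemma mem_finsetSum {ι : Type*} {E : Type*} [AddCommMonoid E] {s : Finset ι} {A : ι → Set E} :
    ∀ {x : E}, x ∈ ∑ k ∈ s, A k ↔ ∃ y : ι → E, (∀ k ∈ s, y k ∈ A k) ∧ ∑ k ∈ s, y k = x := by
  classical
  induction s using Finset.induction_on with
  | empty =>
      intro x
      constructor
      · intro hx
        refine ⟨fun _ => 0, fun k hk => absurd hk (Finset.notMem_empty k), ?_⟩
        rw [Finset.sum_empty] at hx ⊢
        exact (Set.mem_zero.1 hx).symm
      · rintro ⟨y, -, hy⟩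
        rw [Finset.sum_empty] at hy ⊢
        exact Set.mem_zero.2 hy.symm
  | @insert a s' ha ih =>
      intro x
      rw [Finset.sum_insert ha]
      constructor
      · intro hx
        obtain ⟨u, hu, v, hv, huv⟩ := Set.mem_add.1 hx
        obtain ⟨y, hy1, hy2⟩ := ih.1 hv
        refine ⟨Function.update y a u, fun k hk => ?_, ?_⟩
        · rcases Finset.mem_insert.1 hk with rfl | hk
          · rw [Function.update_self]; exact hu
          · rw [Function.update_of_ne (fun h : k = a => ha (by rw [← h]; exact hk))]
            exact hy1 k hk
        · rw [Finset.sum_insert ha, Function.update_self]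
          have hss : ∑ k ∈ s', Function.update y a u k = ∑ k ∈ s', y k :=
            Finset.sum_congr rfl fun k hk =>
              Function.update_of_ne (fun h : k = a => ha (by rw [← h]; exact hk)) _ _
          rw [hss, hy2]
          exact huv
      · rintro ⟨y, hy1, hy2⟩
        rw [Finset.sum_insert ha] at hy2
        exact Set.mem_add.2 ⟨y a, hy1 a (Finset.mem_insert_self a s'),
          ∑ k ∈ s', y k, ih.2 ⟨y, fun k hk => hy1 k (Finset.mem_insert_of_mem hk), rfl⟩, hy2⟩

lemma convex_finsetSum {ι : Type*} {s : Finset ι} {A : ι → Set (Fin n → ℝ)}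
    (h : ∀ k ∈ s, Convex ℝ (A k)) : Convex ℝ (∑ k ∈ s, A k) :=
  Finset.sum_induction A (Convex ℝ) (fun _ _ => Convex.add)
    (by rw [show (0 : Set (Fin n → ℝ)) = {0} from rfl]; exact convex_singleton 0) h

lemma isPolymatroid_min (m : ℕ) (r : Finset (Fin n) → ℕ) (hr : IsPolymatroid r) :
    IsPolymatroid (fun S => min m (r S)) := by
  obtain ⟨h0, hmono, hsub⟩ := hr
  refine ⟨by simp [h0], fun S T hST => min_le_min le_rfl (hmono S T hST), fun S T => ?_⟩
  show min m (r (S ∪ T)) + min m (r (S ∩ T)) ≤ min m (r S) + min m (r T)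
  have h1 := hsub S T
  have h2 := hmono (S ∩ T) S Finset.inter_subset_left
  have h3 := hmono (S ∩ T) T Finset.inter_subset_right
  rcases le_total m (r S) with hS | hS
  · have e1 : min m (r S) = m := min_eq_left hS
    have l1 : min m (r (S ∪ T)) ≤ m := min_le_left _ _
    have l2 : min m (r (S ∩ T)) ≤ min m (r T) := min_le_min le_rfl h3
    omega
  · rcases le_total m (r T) with hT | hT
    · have e1 : min m (r T) = m := min_eq_left hT
      have l1 : min m (r (S ∪ T)) ≤ m := min_le_left _ _
      have l2 : min m (r (S ∩ T)) ≤ min m (r S) := min_le_min le_rfl h2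
      omega
    · have e1 : min m (r S) = r S := min_eq_right hS
      have e2 : min m (r T) = r T := min_eq_right hT
      have l1 : min m (r (S ∪ T)) ≤ r (S ∪ T) := min_le_right _ _
      have l2 : min m (r (S ∩ T)) ≤ r (S ∩ T) := min_le_right _ _
      omega

lemma isPolymatroid_sum {ι : Type*} (s : Finset ι) (g : ι → Finset (Fin n) → ℕ)
    (h : ∀ k ∈ s, IsPolymatroid (g k)) :
    IsPolymatroid (fun S => ∑ k ∈ s, g k S) := by
  refine ⟨Finset.sum_eq_zero fun k hk => (h k hk).1, fun S T hST =>
    Finset.sum_le_sum fun k hk => (h k hk).2.1 S T hST, fun S T => ?_⟩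
  rw [← Finset.sum_add_distrib, ← Finset.sum_add_distrib]
  exact Finset.sum_le_sum fun k hk => (h k hk).2.2 S T

lemma gv_sum {ι : Type*} (s : Finset ι) (g : ι → Finset (Fin n) → ℕ) (σ : Equiv.Perm (Fin n)) :
    gv (fun S => ∑ k ∈ s, g k S) σ = ∑ k ∈ s, gv (g k) σ := by
  funext j
  simp only [gv, Nat.cast_sum, Finset.sum_apply, Finset.sum_sub_distrib]

end PolyAux

/-- For a polymatroid `r` of rank `d`, the base polytope of `r̄ = r_0 + ⋯ + r_d` is the
Minkowski sum of the base polytopes of the truncations `r_k S = min (d - k) (r S)`. -/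
theorem basePolytope_bar_eq_minkowski_sum {n : ℕ} (r : Finset (Fin n) → ℕ)
    (hr : IsPolymatroid r) (d : ℕ) (hd : r Finset.univ = d) :
    basePolytope (fun S => ∑ k ∈ Finset.range (d + 1), min (d - k) (r S)) =
      ∑ k ∈ Finset.range (d + 1), basePolytope (fun S => min (d - k) (r S)) := by
  classical
  have hgk : ∀ k : ℕ, IsPolymatroid (fun S => min (d - k) (r S)) := fun k =>
    PolyAux.isPolymatroid_min (d - k) r hr
  have hF : IsPolymatroid (fun S => ∑ k ∈ Finset.range (d + 1), min (d - k) (r S)) :=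
    PolyAux.isPolymatroid_sum (Finset.range (d + 1)) (fun k S => min (d - k) (r S))
      (fun k _ => hgk k)
  apply Set.Subset.antisymm
  · intro x hx
    refine convexHull_min ?_ (PolyAux.convex_finsetSum fun k _ => PolyAux.convex_base _)
      (PolyAux.base_subset_hull _ hF hx)
    rintro _ ⟨σ, rfl⟩
    show PolyAux.gv (fun S => ∑ k ∈ Finset.range (d + 1), min (d - k) (r S)) σ ∈ _
    rw [PolyAux.gv_sum (Finset.range (d + 1)) (fun k S => min (d - k) (r S)) σ]
    exact PolyAux.mem_finsetSum.2 ⟨fun k => PolyAux.gv (fun S => min (d - k) (r S)) σ,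
      fun k _ => PolyAux.gv_mem _ (hgk k) σ, rfl⟩
  · intro x hx
    obtain ⟨y, hy, hsum⟩ := PolyAux.mem_finsetSum.1 hx
    refine ⟨fun i => ?_, fun S => ?_, ?_⟩
    · rw [← hsum, Finset.sum_apply]
      exact Finset.sum_nonneg fun k hk => (hy k hk).1 i
    · rw [← hsum, Nat.cast_sum]
      calc ∑ i ∈ S, (∑ k ∈ Finset.range (d + 1), y k) i
          = ∑ k ∈ Finset.range (d + 1), ∑ i ∈ S, y k i := by
            simp only [Finset.sum_apply]
            exact Finset.sum_comm
        _ ≤ ∑ k ∈ Finset.range (d + 1), ((min (d - k) (r S) : ℕ) : ℝ) :=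
            Finset.sum_le_sum fun k hk => (hy k hk).2.1 S
    · rw [← hsum, Nat.cast_sum]
      calc ∑ i, (∑ k ∈ Finset.range (d + 1), y k) i
          = ∑ k ∈ Finset.range (d + 1), ∑ i, y k i := by
            simp only [Finset.sum_apply]
            exact Finset.sum_comm
        _ = ∑ k ∈ Finset.range (d + 1), ((min (d - k) (r Finset.univ) : ℕ) : ℝ) :=
            Finset.sum_congr rfl fun k hk => (hy k hk).2.2
end

section
/- Let d ≥ 0 and let A ⊆ (ℤ_{≥0})^n be a nonempty finite set such that Σ_{i=1}^n αᵢ = d for every α ∈ A. For 0 ≤ k ≤ d set A_k = {α ∈ (ℤ_{≥0})^n : Σ_{i=1}^n αᵢ = d−k and α ≤ β componentwise for some β ∈ A}. Then for every S ⊆ [n], max_{α ∈ A_k} Σ_{i∈S} αᵢ = min(d−k, max_{β ∈ A} Σ_{i∈S} βᵢ). -/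
lemma dec_aux {n : ℕ} (α : Fin n → ℕ) (i : Fin n) (hi : 0 < α i) (S : Finset (Fin n)) :
    Function.update α i (α i - 1) ≤ α ∧
    (∑ j ∈ S, Function.update α i (α i - 1) j =
      if i ∈ S then (∑ j ∈ S, α j) - 1 else ∑ j ∈ S, α j) := by
  constructor
  · intro j
    rcases eq_or_ne j i with rfl | h
    · simp
    · simp [Function.update_apply, h]
  · by_cases hiS : i ∈ S
    · rw [Finset.sum_update_of_mem hiS, if_pos hiS]
      have h2 : ∑ j ∈ S, α j = α i + ∑ j ∈ S \ {i}, α j := by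
        rw [Finset.sum_eq_sum_sdiff_singleton_add hiS]; ring
      omega
    · rw [if_neg hiS]
      apply Finset.sum_congr rfl
      intro j hj
      have : j ≠ i := fun h => hiS (h ▸ hj)
      simp [Function.update_apply, this]

lemma exists_below {n : ℕ} (β : Fin n → ℕ) (d : ℕ) (hβ : ∑ i, β i = d)
    (S : Finset (Fin n)) :
    ∀ j, j ≤ d → ∃ α : Fin n → ℕ, α ≤ β ∧ ∑ i, α i = d - j ∧
      ∑ i ∈ S, α i = min (d - j) (∑ i ∈ S, β i) := by
  intro j
  induction j with
  | zero =>
    intro _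
    refine ⟨β, le_refl _, by simpa using hβ, ?_⟩
    have : ∑ i ∈ S, β i ≤ d := hβ ▸ Finset.sum_le_sum_of_subset (Finset.subset_univ S)
    simp [min_eq_right this]
  | succ j ih =>
    intro hj
    obtain ⟨α, hle, hsum, hS⟩ := ih (by omega)
    have htot : ∑ i ∈ S, α i ≤ ∑ i, α i :=
      Finset.sum_le_sum_of_subset (Finset.subset_univ S)
    by_cases hcase : ∑ i ∈ S, β i ≤ d - (j+1)
    · -- decrement outside S
      have hSval : ∑ i ∈ S, α i = ∑ i ∈ S, β i := by omega
      have hcompl : 0 < ∑ i ∈ Sᶜ, α i := by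
        have := Finset.sum_add_sum_compl S α
        omega
      have : ∃ i ∈ Sᶜ, α i ≠ 0 := by
        by_contra h
        push_neg at h
        exact absurd (Finset.sum_eq_zero h) (by omega)
      obtain ⟨i, hiC, hi0⟩ := this
      obtain ⟨h1, h2⟩ := dec_aux α i (by omega) S
      obtain ⟨h1', h2'⟩ := dec_aux α i (by omega) Finset.univ
      have hiS : i ∉ S := Finset.mem_compl.mp hiC
      refine ⟨Function.update α i (α i - 1), le_trans h1 hle, ?_, ?_⟩
      · simp only [Finset.mem_univ, if_true] at h2'
        omega
      · rw [h2, if_neg hiS]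
        omega
    · -- decrement inside S
      have hSval : ∑ i ∈ S, α i = d - j := by omega
      have : ∃ i ∈ S, α i ≠ 0 := by
        by_contra h
        push_neg at h
        exact absurd (Finset.sum_eq_zero h) (by omega)
      obtain ⟨i, hiS, hi0⟩ := this
      obtain ⟨h1, h2⟩ := dec_aux α i (by omega) S
      obtain ⟨h1', h2'⟩ := dec_aux α i (by omega) Finset.univ
      refine ⟨Function.update α i (α i - 1), le_trans h1 hle, ?_, ?_⟩
      · simp only [Finset.mem_univ, if_true] at h2'
        omega
      · rw [h2, if_pos hiS]
        omega

/-- Let `A ⊆ (ℤ_{≥0})ⁿ` be a nonempty finite set of vectors all of coordinate sum `d`,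
and for `0 ≤ k ≤ d` let `A_k` be the set of nonnegative integer vectors of coordinate
sum `d − k` lying componentwise below some element of `A`.  Then for every `S ⊆ [n]`,
`max_{α ∈ A_k} ∑_{i ∈ S} α_i = min (d − k) (max_{β ∈ A} ∑_{i ∈ S} β_i)`. -/
theorem truncation_eq_derivative_polymatroid {n : ℕ} (d k : ℕ) (hk : k ≤ d)
    (A : Finset (Fin n → ℕ)) (hA : A.Nonempty)
    (hdeg : ∀ α ∈ A, ∑ i, α i = d) (S : Finset (Fin n)) :
    ((A.biUnion fun β => (Finset.Iic β).filter fun α => ∑ i, α i = d - k).sup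
        fun α => ∑ i ∈ S, α i) =
      min (d - k) (A.sup fun β => ∑ i ∈ S, β i) := by
  apply le_antisymm
  · apply Finset.sup_le
    intro α hα
    simp only [Finset.mem_biUnion, Finset.mem_filter, Finset.mem_Iic] at hα
    obtain ⟨β, hβA, hle, hsum⟩ := hα
    refine le_min ?_ ?_
    · exact hsum ▸ Finset.sum_le_sum_of_subset (Finset.subset_univ S)
    · exact le_trans (Finset.sum_le_sum fun i _ => hle i)
        (Finset.le_sup (f := fun β => ∑ i ∈ S, β i) hβA)
  · obtain ⟨β, hβA, hβmax⟩ := Finset.exists_mem_eq_sup A hA (fun β => ∑ i ∈ S, β i)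
    obtain ⟨α, hle, hsum, hS⟩ := exists_below β d (hdeg β hβA) S k hk
    rw [hβmax, ← hS]
    have hmem : α ∈ A.biUnion fun β => (Finset.Iic β).filter fun α => ∑ i, α i = d - k := by
      simp only [Finset.mem_biUnion, Finset.mem_filter, Finset.mem_Iic]
      exact ⟨β, hβA, hle, hsum⟩
    exact Finset.le_sup (f := fun (γ : Fin n → ℕ) => ∑ i ∈ S, γ i) hmem
end

section
/- Let A ⊆ (ℤ_{≥0})^n be a nonempty finite M-convex set with Σ_{i=1}^n αᵢ = d for every α ∈ A, and define ρ(S) = max_{α∈A} Σ_{i∈S} αᵢ for S ⊆ [n], with truncations ρ_k(S) = min(d−k, ρ(S)). Then for every 0 ≤ k ≤ d, the set of integer points of the base polytope B(ρ_k), i.e. the set of α ∈ (ℤ_{≥0})^n with Σ_{i∈S} αᵢ ≤ ρ_k(S) for all S ⊆ [n] and Σ_{i=1}^n αᵢ = d−k, is exactly A_k = {α ∈ (ℤ_{≥0})^n : Σ_{i=1}^n αᵢ = d−k and α ≤ β componentwise for some β ∈ A}. -/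
/-- A finite set `A ⊆ ℤⁿ` is M-convex: for all `x, y ∈ A` and every index `i` with
`x i > y i` there is an index `j` with `x j < y j` such that `x − δᵢ + δⱼ ∈ A` and
`y + δᵢ − δⱼ ∈ A`. -/
def MConvex {n : ℕ} (A : Finset (Fin n → ℤ)) : Prop :=
  ∀ x ∈ A, ∀ y ∈ A, ∀ i : Fin n, y i < x i →
    ∃ j : Fin n, x j < y j ∧
      x - Pi.single i 1 + Pi.single j 1 ∈ A ∧
      y + Pi.single i 1 - Pi.single j 1 ∈ A

open Finset in
lemma dep_tight {n : ℕ} {A : Finset (Fin n → ℤ)} (hM : MConvex A)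
    {y : Fin n → ℤ} (hy : y ∈ A) (j : Fin n) {z : Fin n → ℤ} (hz : z ∈ A) :
    ∑ i ∈ univ.filter (fun i => y + Pi.single j 1 - Pi.single i 1 ∈ A), z i ≤
      ∑ i ∈ univ.filter (fun i => y + Pi.single j 1 - Pi.single i 1 ∈ A), y i := by
  set T := univ.filter (fun i => y + Pi.single j 1 - Pi.single i 1 ∈ A) with hT
  by_contra hcon
  push_neg at hcon
  have hZne : (A.filter (fun w => ∑ i ∈ T, y i < ∑ i ∈ T, w i)).Nonempty :=
    ⟨z, mem_filter.mpr ⟨hz, hcon⟩⟩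
  obtain ⟨z₀, hz₀, hmin⟩ := Finset.exists_min_image _
    (fun w => ∑ m, (w m - y m).natAbs) hZne
  rw [mem_filter] at hz₀
  obtain ⟨hz₀A, hz₀T⟩ := hz₀
  obtain ⟨i, hiT, hilt⟩ := Finset.exists_lt_of_sum_lt hz₀T
  obtain ⟨l, hllt, hz', hy'⟩ := hM z₀ hz₀A y hy i hilt
  have hil : i ≠ l := by rintro rfl; omega
  by_cases hlT : l ∈ T
  · -- closer counterexample, contradiction with minimality
    have hsum : ∑ m ∈ T, (z₀ - Pi.single i 1 + Pi.single l 1 : Fin n → ℤ) m = ∑ m ∈ T, z₀ m := by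
      simp only [Pi.add_apply, Pi.sub_apply]
      rw [Finset.sum_add_distrib, Finset.sum_sub_distrib,
        Finset.sum_pi_single' i (1 : ℤ) T, Finset.sum_pi_single' l (1 : ℤ) T]
      simp [hiT, hlT]
    have hmem : z₀ - Pi.single i 1 + Pi.single l 1 ∈
        A.filter (fun w => ∑ i ∈ T, y i < ∑ i ∈ T, w i) :=
      mem_filter.mpr ⟨hz', by rw [hsum]; exact hz₀T⟩
    have hge := hmin _ hmem
    have hdist : (∑ m, ((z₀ - Pi.single i 1 + Pi.single l 1 : Fin n → ℤ) m - y m).natAbs) <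
        ∑ m, (z₀ m - y m).natAbs := by
      apply Finset.sum_lt_sum
      · intro m _
        by_cases hmi : m = i
        · subst hmi
          simp only [Pi.add_apply, Pi.sub_apply, Pi.single_eq_same,
            Pi.single_apply, hil, if_false]
          omega
        · by_cases hml : m = l
          · subst hml
            simp only [Pi.add_apply, Pi.sub_apply, Pi.single_eq_same,
              Pi.single_apply, Ne.symm hil, if_false]
            omega
          · simp [Pi.single_apply, hmi, hml]
      · exact ⟨i, mem_univ i, by
          simp only [Pi.add_apply, Pi.sub_apply, Pi.single_eq_same,
            Pi.single_apply, hil, if_false]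
          omega⟩
    omega
  · -- derive l ∈ T, contradiction
    exfalso
    apply hlT
    rw [hT, mem_filter]
    refine ⟨mem_univ l, ?_⟩
    by_cases hij : i = j
    · subst hij; exact hy'
    · have hjmem : j ∈ T := mem_filter.mpr ⟨mem_univ j, by rwa [add_sub_cancel_right]⟩
      have hjl : j ≠ l := fun h => hlT (h ▸ hjmem)
      have hw : y + Pi.single j 1 - Pi.single i 1 ∈ A := (mem_filter.mp hiT).2
      have hvw : (y + Pi.single j 1 - Pi.single i 1 : Fin n → ℤ) i < (y + Pi.single i 1 - Pi.single l 1 : Fin n → ℤ) i := by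
        simp only [Pi.add_apply, Pi.sub_apply, Pi.single_eq_same,
          Pi.single_apply, hij, hil, if_false]
        omega
      obtain ⟨m, hm, hvm, hwm⟩ := hM _ hy' _ hw i hvw
      have hmjl : m = j ∨ m = l := by
        by_contra hmm
        push_neg at hmm
        obtain ⟨hmj, hml⟩ := hmm
        simp only [Pi.add_apply, Pi.sub_apply, Pi.single_apply, hmj, hml, if_false] at hm
        by_cases hmi : m = i
        · simp [hmi] at hm; omega
        · simp [hmi] at hm
      rcases hmjl with rfl | rfl
      · have e : y + Pi.single i 1 - Pi.single l 1 - Pi.single i 1 + Pi.single m 1 =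
            y + Pi.single m 1 - Pi.single l 1 := by abel
        rwa [e] at hvm
      · have e : y + Pi.single j 1 - Pi.single i 1 + Pi.single i 1 - Pi.single m 1 =
            y + Pi.single j 1 - Pi.single m 1 := by abel
        rwa [e] at hwm

/-- `ρ(S) = max_{α ∈ A} ∑_{i ∈ S} α_i`. -/
def rhoOf {n : ℕ} (A : Finset (Fin n → ℤ)) (hA : A.Nonempty)
    (S : Finset (Fin n)) : ℤ :=
  A.sup' hA fun α => ∑ i ∈ S, α i

/-- Let `A ⊆ (ℤ_{≥0})ⁿ` be a nonempty finite M-convex set of vectors of coordinate sum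
`d`, with `ρ(S) = max_{α∈A} ∑_{i∈S} α_i` and truncations `ρ_k(S) = min (d−k) (ρ S)`.
For `0 ≤ k ≤ d`, the integer points of the base polytope `B(ρ_k)` are exactly
`A_k = {α ∈ (ℤ_{≥0})ⁿ : ∑ α_i = d−k and α ≤ β componentwise for some β ∈ A}`. -/
theorem latticePoints_basePolytope_truncation {n : ℕ} (d k : ℕ) (hk : k ≤ d)
    (A : Finset (Fin n → ℤ)) (hA : A.Nonempty)
    (hpos : ∀ α ∈ A, ∀ i, 0 ≤ α i)
    (hdeg : ∀ α ∈ A, ∑ i, α i = (d : ℤ))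
    (hM : MConvex A) :
    {α : Fin n → ℤ | (∀ i, 0 ≤ α i) ∧
        (∀ S : Finset (Fin n), ∑ i ∈ S, α i ≤ min ((d : ℤ) - k) (rhoOf A hA S)) ∧
        ∑ i, α i = (d : ℤ) - k} =
      {α : Fin n → ℤ | (∀ i, 0 ≤ α i) ∧ ∑ i, α i = (d : ℤ) - k ∧
        ∃ β ∈ A, α ≤ β} := by
  ext α
  simp only [Set.mem_setOf_eq]
  constructor
  · rintro ⟨h1, h2, h3⟩
    refine ⟨h1, h3, ?_⟩
    obtain ⟨y, hyA, hymin⟩ := Finset.exists_min_image A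
      (fun w => ∑ m, (α m - w m).toNat) hA
    refine ⟨y, hyA, ?_⟩
    by_contra hle
    simp only [Pi.le_def, not_forall, not_le] at hle
    obtain ⟨j, hj⟩ := hle
    set T := Finset.univ.filter (fun i => y + Pi.single j 1 - Pi.single i 1 ∈ A) with hT
    have hjT : j ∈ T := Finset.mem_filter.mpr ⟨Finset.mem_univ j, by
      rwa [add_sub_cancel_right]⟩
    have hyle : ∀ i ∈ T, y i ≤ α i := by
      intro i hiT
      by_contra hlt
      push_neg at hlt
      have hij : i ≠ j := by rintro rfl; omega
      have hy' : y + Pi.single j 1 - Pi.single i 1 ∈ A := (Finset.mem_filter.mp hiT).2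
      have hge := hymin _ hy'
      have hlt2 : (∑ m, (α m - (y + Pi.single j 1 - Pi.single i 1 : Fin n → ℤ) m).toNat) <
          ∑ m, (α m - y m).toNat := by
        apply Finset.sum_lt_sum
        · intro m _
          by_cases hmi : m = i
          · subst hmi
            simp only [Pi.add_apply, Pi.sub_apply, Pi.single_eq_same,
              Pi.single_apply, hij, if_false]
            omega
          · by_cases hmj : m = j
            · subst hmj
              simp only [Pi.add_apply, Pi.sub_apply, Pi.single_eq_same,
                Pi.single_apply, Ne.symm hij, if_false]
              omega
            · simp [Pi.single_apply, hmi, hmj]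
        · refine ⟨j, Finset.mem_univ j, ?_⟩
          simp only [Pi.add_apply, Pi.sub_apply, Pi.single_eq_same,
            Pi.single_apply, Ne.symm hij, if_false]
          omega
      omega
    have hb1 : ∑ i ∈ T, α i ≤ rhoOf A hA T := le_trans (h2 T) (min_le_right _ _)
    have hb2 : rhoOf A hA T ≤ ∑ i ∈ T, y i :=
      Finset.sup'_le _ _ (fun z hz => dep_tight hM hyA j hz)
    have hb3 : ∑ i ∈ T, y i < ∑ i ∈ T, α i := Finset.sum_lt_sum hyle ⟨j, hjT, hj⟩
    omega
  · rintro ⟨h1, h3, β, hβ, hle⟩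
    refine ⟨h1, fun S => le_min ?_ ?_, h3⟩
    · calc ∑ i ∈ S, α i ≤ ∑ i, α i :=
            Finset.sum_le_sum_of_subset_of_nonneg (Finset.subset_univ S)
              (fun i _ _ => h1 i)
        _ = (d : ℤ) - k := h3
    · calc ∑ i ∈ S, α i ≤ ∑ i ∈ S, β i := Finset.sum_le_sum (fun i _ => hle i)
        _ ≤ rhoOf A hA S := Finset.le_sup' (fun z => ∑ i ∈ S, z i) hβ
end

section
/- Let A ⊆ (ℤ_{≥0})^n be a nonempty finite M-convex set with Σ_{i=1}^n αᵢ = d for every α ∈ A. Then the function ρ : 2^{[n]} → ℤ_{≥0} defined by ρ(S) = max_{α∈A} Σ_{i∈S} αᵢ is a polymatroid of rank d; that is, ρ(∅) = 0, ρ(S) ≤ ρ(T) whenever S ⊆ T, ρ(S∪T) + ρ(S∩T) ≤ ρ(S) + ρ(T) for all S, T ⊆ [n], and ρ([n]) = d. -/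
lemma sum_exch {n : ℕ} (U : Finset (Fin n)) (x : Fin n → ℤ) (i j : Fin n) :
    ∑ k ∈ U, (x - Pi.single i 1 + Pi.single j 1 : Fin n → ℤ) k
      = (∑ k ∈ U, x k) - (if i ∈ U then 1 else 0) + (if j ∈ U then 1 else 0) := by
  simp [Finset.sum_add_distrib, Finset.sum_sub_distrib, Finset.sum_pi_single']

lemma sum_exch' {n : ℕ} (U : Finset (Fin n)) (y : Fin n → ℤ) (i j : Fin n) :
    ∑ k ∈ U, (y + Pi.single i 1 - Pi.single j 1 : Fin n → ℤ) k
      = (∑ k ∈ U, y k) + (if i ∈ U then 1 else 0) - (if j ∈ U then 1 else 0) := by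
  simp [Finset.sum_add_distrib, Finset.sum_sub_distrib, Finset.sum_pi_single']

/-- Let `A ⊆ (ℤ_{≥0})ⁿ` be a nonempty finite M-convex set of vectors of coordinate sum
`d`.  Then `ρ(S) = max_{α∈A} ∑_{i∈S} α_i` is a polymatroid of rank `d`: it takes
nonnegative values, vanishes on the empty set, is monotone under inclusion, is
submodular, and `ρ([n]) = d`. -/
theorem rho_isPolymatroid {n : ℕ} (d : ℕ)
    (A : Finset (Fin n → ℤ)) (hA : A.Nonempty)
    (hpos : ∀ α ∈ A, ∀ i, 0 ≤ α i)
    (hdeg : ∀ α ∈ A, ∑ i, α i = (d : ℤ))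
    (hM : MConvex A) :
    rhoOf A hA ∅ = 0 ∧
    (∀ S, 0 ≤ rhoOf A hA S) ∧
    (∀ S T, S ⊆ T → rhoOf A hA S ≤ rhoOf A hA T) ∧
    (∀ S T, rhoOf A hA (S ∪ T) + rhoOf A hA (S ∩ T) ≤ rhoOf A hA S + rhoOf A hA T) ∧
    rhoOf A hA Finset.univ = (d : ℤ) := by
  classical
  have hempty : rhoOf A hA ∅ = 0 := by simp [rhoOf]
  have hnonneg : ∀ S, 0 ≤ rhoOf A hA S := by
    intro S
    obtain ⟨α, hα⟩ := hA
    exact le_trans (Finset.sum_nonneg fun i _ => hpos α hα i)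
      (Finset.le_sup' (fun α => ∑ i ∈ S, α i) hα)
  have hmono : ∀ S T, S ⊆ T → rhoOf A hA S ≤ rhoOf A hA T := by
    intro S T hST
    apply Finset.sup'_le
    intro α hα
    exact le_trans (Finset.sum_le_sum_of_subset_of_nonneg hST fun i _ _ => hpos α hα i)
      (Finset.le_sup' (fun α => ∑ i ∈ T, α i) hα)
  have hrank : rhoOf A hA Finset.univ = (d : ℤ) := by
    apply le_antisymm
    · exact Finset.sup'_le _ _ fun α hα => (hdeg α hα).le
    · obtain ⟨α, hα⟩ := hA
      exact (hdeg α hα) ▸ Finset.le_sup' (fun α => ∑ i, α i) hα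
  refine ⟨hempty, hnonneg, hmono, ?_, hrank⟩
  intro S T
  obtain ⟨x0, hx0A, hx0⟩ := Finset.exists_mem_eq_sup' hA (fun α => ∑ i ∈ S ∪ T, α i)
  obtain ⟨y0, hy0A, hy0⟩ := Finset.exists_mem_eq_sup' hA (fun α => ∑ i ∈ S ∩ T, α i)
  set P : Finset ((Fin n → ℤ) × (Fin n → ℤ)) :=
    (A ×ˢ A).filter (fun p => ∑ i ∈ S ∪ T, p.1 i = rhoOf A hA (S ∪ T) ∧
                               ∑ i ∈ S ∩ T, p.2 i = rhoOf A hA (S ∩ T)) with hPdef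
  clear_value P
  have hPne : P.Nonempty := by
    refine ⟨(x0, y0), ?_⟩
    rw [hPdef]
    simp only [Finset.mem_filter, Finset.mem_product]
    exact ⟨⟨hx0A, hy0A⟩, hx0.symm, hy0.symm⟩
  obtain ⟨p, hpP, hpmin⟩ :=
    Finset.exists_min_image P (fun p => ∑ i ∈ T \ S, max (p.1 i - p.2 i) 0) hPne
  obtain ⟨x, y⟩ := p
  rw [hPdef] at hpP
  simp only [Finset.mem_filter, Finset.mem_product] at hpP
  obtain ⟨⟨hxA, hyA⟩, hxopt, hyopt⟩ := hpP
  have key : ∀ i ∈ T \ S, x i ≤ y i := by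
    by_contra h
    push_neg at h
    obtain ⟨i, hiTS, hyx⟩ := h
    obtain ⟨j, hxj, hx'A, hy'A⟩ := hM x hxA y hyA i hyx
    have hij : i ≠ j := fun h => absurd hxj (not_lt.2 (h ▸ hyx.le))
    rw [Finset.mem_sdiff] at hiTS
    obtain ⟨hiT, hiS⟩ := hiTS
    by_cases hjS : j ∈ S
    · -- use the pair (x - δᵢ + δⱼ, y)
      have hmem : ((x - Pi.single i 1 + Pi.single j 1 : Fin n → ℤ), y) ∈ P := by
        rw [hPdef]
        simp only [Finset.mem_filter, Finset.mem_product]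
        refine ⟨⟨hx'A, hyA⟩, ?_, hyopt⟩
        rw [sum_exch]
        simp [Finset.mem_union, hiT, hjS, hxopt]
      have hlt : ∑ k ∈ T \ S,
            max ((x - Pi.single i 1 + Pi.single j 1 : Fin n → ℤ) k - y k) 0
          < ∑ k ∈ T \ S, max (x k - y k) 0 := by
        apply Finset.sum_lt_sum
        · intro k hk
          rcases eq_or_ne k i with rfl | hki
          · simp only [Pi.add_apply, Pi.sub_apply, Pi.single_eq_same,
              Pi.single_eq_of_ne hij]
            clear * - hyx
            omega
          · rcases eq_or_ne k j with rfl | hkj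
            · exact absurd hjS (Finset.mem_sdiff.1 hk).2
            · simp [Pi.single_eq_of_ne hki, Pi.single_eq_of_ne hkj]
        · refine ⟨i, Finset.mem_sdiff.2 ⟨hiT, hiS⟩, ?_⟩
          simp only [Pi.add_apply, Pi.sub_apply, Pi.single_eq_same,
            Pi.single_eq_of_ne hij]
          clear * - hyx
          omega
      exact absurd (hpmin _ hmem) (not_le.2 hlt)
    · -- use the pair (x, y + δᵢ - δⱼ)
      have hmem : (x, (y + Pi.single i 1 - Pi.single j 1 : Fin n → ℤ)) ∈ P := by
        rw [hPdef]
        simp only [Finset.mem_filter, Finset.mem_product]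
        refine ⟨⟨hxA, hy'A⟩, hxopt, ?_⟩
        rw [sum_exch']
        have hiST : i ∉ S ∩ T := fun h => hiS (Finset.mem_inter.1 h).1
        have hjST : j ∉ S ∩ T := fun h => hjS (Finset.mem_inter.1 h).1
        simp [hiST, hjST, hyopt]
      have hlt : ∑ k ∈ T \ S,
            max (x k - (y + Pi.single i 1 - Pi.single j 1 : Fin n → ℤ) k) 0
          < ∑ k ∈ T \ S, max (x k - y k) 0 := by
        apply Finset.sum_lt_sum
        · intro k hk
          rcases eq_or_ne k i with rfl | hki
          · simp only [Pi.sub_apply, Pi.add_apply, Pi.single_eq_same,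
              Pi.single_eq_of_ne hij]
            clear * - hyx
            omega
          · rcases eq_or_ne k j with rfl | hkj
            · simp only [Pi.sub_apply, Pi.add_apply, Pi.single_eq_same,
                Pi.single_eq_of_ne hki]
              clear * - hxj
              omega
            · simp [Pi.single_eq_of_ne hki, Pi.single_eq_of_ne hkj]
        · refine ⟨i, Finset.mem_sdiff.2 ⟨hiT, hiS⟩, ?_⟩
          simp only [Pi.sub_apply, Pi.add_apply, Pi.single_eq_same,
            Pi.single_eq_of_ne hij]
          clear * - hyx
          omega
      exact absurd (hpmin _ hmem) (not_le.2 hlt)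
  -- conclude submodularity
  have hsplit1 : ∑ k ∈ S ∪ T, x k = (∑ k ∈ S, x k) + ∑ k ∈ T \ S, x k := by
    rw [← Finset.union_sdiff_self_eq_union, Finset.sum_union Finset.disjoint_sdiff]
  have hsplit2 : (∑ k ∈ T \ S, y k) + ∑ k ∈ S ∩ T, y k = ∑ k ∈ T, y k := by
    rw [Finset.inter_comm, ← Finset.sum_union (Finset.disjoint_left.2 fun a ha hb =>
        (Finset.mem_sdiff.1 ha).2 (Finset.mem_inter.1 hb).2),
      Finset.sdiff_union_inter]
  have hle : ∑ k ∈ T \ S, x k ≤ ∑ k ∈ T \ S, y k := Finset.sum_le_sum key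
  have h1 : ∑ k ∈ S, x k ≤ rhoOf A hA S := Finset.le_sup' (fun α => ∑ i ∈ S, α i) hxA
  have h2 : ∑ k ∈ T, y k ≤ rhoOf A hA T := Finset.le_sup' (fun α => ∑ i ∈ T, α i) hyA
  linarith [hxopt, hyopt, hsplit1, hsplit2]
end

section
/- Let A ⊆ (ℤ_{≥0})^n be a nonempty finite M-convex set with Σ_{i=1}^n αᵢ = d for every α ∈ A, and let ρ(S) = max_{α∈A} Σ_{i∈S} αᵢ for S ⊆ [n]. Then the convex hull of A in ℝ^n equals the base polytope B(ρ), and A = B(ρ) ∩ ℤ^n. -/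
namespace MConvexAux

open Finset

variable {n : ℕ}

lemma sum_single_mem (S : Finset (Fin n)) (k : Fin n) (c : ℤ) :
    ∑ i ∈ S, (Pi.single k c : Fin n → ℤ) i = if k ∈ S then c else 0 := by
  have h : ∀ i ∈ S, (Pi.single k c : Fin n → ℤ) i = if i = k then c else 0 := by
    intro i _; rw [Pi.single_apply]
  rw [Finset.sum_congr rfl h, Finset.sum_ite_eq' S k fun _ => c]

lemma sum_exch (v : Fin n → ℤ) (k j : Fin n) (S : Finset (Fin n)) :
    ∑ i ∈ S, (v - Pi.single k 1 + Pi.single j 1 : Fin n → ℤ) i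
      = (∑ i ∈ S, v i) - (if k ∈ S then 1 else 0) + (if j ∈ S then 1 else 0) := by
  simp only [Pi.add_apply, Pi.sub_apply, Finset.sum_add_distrib, Finset.sum_sub_distrib,
    sum_single_mem]

lemma sum_exch' (v : Fin n → ℤ) (k j : Fin n) (S : Finset (Fin n)) :
    ∑ i ∈ S, (v + Pi.single k 1 - Pi.single j 1 : Fin n → ℤ) i
      = (∑ i ∈ S, v i) + (if k ∈ S then 1 else 0) - (if j ∈ S then 1 else 0) := by
  simp only [Pi.add_apply, Pi.sub_apply, Finset.sum_add_distrib, Finset.sum_sub_distrib,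
    sum_single_mem]

lemma apply_exch (v : Fin n → ℤ) (k j i : Fin n) :
    (v - Pi.single k 1 + Pi.single j 1 : Fin n → ℤ) i
      = v i - (if i = k then 1 else 0) + (if i = j then 1 else 0) := by
  simp [Pi.single_apply]

lemma apply_exch' (v : Fin n → ℤ) (k j i : Fin n) :
    (v + Pi.single k 1 - Pi.single j 1 : Fin n → ℤ) i
      = v i + (if i = k then 1 else 0) - (if i = j then 1 else 0) := by
  simp [Pi.single_apply]

/-- ℓ¹ distance on `Fin n → ℤ`. -/
def D1 (a b : Fin n → ℤ) : ℤ := ∑ i, |a i - b i|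

lemma D1_exch (γ α : Fin n → ℤ) (k j : Fin n) (hkj : k ≠ j)
    (hk : α k < γ k) (hj : γ j < α j) :
    D1 (γ - Pi.single k 1 + Pi.single j 1) α = D1 γ α - 2 := by
  unfold D1
  have key : ∀ i : Fin n, |(γ - Pi.single k 1 + Pi.single j 1 : Fin n → ℤ) i - α i|
      = |γ i - α i| - (if i = k then 1 else 0) - (if i = j then 1 else 0) := by
    intro i
    rw [apply_exch]
    rcases eq_or_ne i k with rfl | hik
    · simp only [if_pos rfl, if_neg hkj.symm, if_neg (hkj : i ≠ j)]
      have h1 : α i < γ i := hk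
      rw [abs_of_nonneg (by omega), abs_of_pos (by omega : (0:ℤ) < γ i - α i)]
      omega
    · rcases eq_or_ne i j with rfl | hij
      · simp only [if_neg hik, if_pos rfl]
        have h1 : γ i < α i := hj
        rw [abs_of_nonpos (by omega), abs_of_neg (by omega : γ i - α i < 0)]
        omega
      · simp [hik, hij]
  rw [Finset.sum_congr rfl fun i _ => key i, Finset.sum_sub_distrib, Finset.sum_sub_distrib]
  have e1 : ∑ i : Fin n, (if i = k then (1:ℤ) else 0) = 1 := by
    rw [Finset.sum_ite_eq' Finset.univ k fun _ => (1:ℤ)]; simp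
  have e2 : ∑ i : Fin n, (if i = j then (1:ℤ) else 0) = 1 := by
    rw [Finset.sum_ite_eq' Finset.univ j fun _ => (1:ℤ)]; simp
  rw [e1, e2]; ring

lemma slice_sup (A' : Finset (Fin n → ℤ)) (hM : MConvex A')
    (i : Fin n) (c : ℤ) (S : Finset (Fin n)) (hiS : i ∉ S)
    (hslice : ∃ β ∈ A', β i = c) (ρS ρSi : ℤ)
    (hS_le : ∀ α ∈ A', ∑ j ∈ S, α j ≤ ρS)
    (hS_att : ∃ α ∈ A', ∑ j ∈ S, α j = ρS)
    (hSi_le : ∀ α ∈ A', ∑ j ∈ insert i S, α j ≤ ρSi)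
    (hSi_att : ∃ α ∈ A', ∑ j ∈ insert i S, α j = ρSi)
    (t : ℤ) (h1 : t ≤ ρS) (h2 : t + c ≤ ρSi) :
    ∃ γ ∈ A', γ i = c ∧ t ≤ ∑ j ∈ S, γ j := by
  by_cases hcase : ρSi - c ≤ ρS
  · -- take γ tight on insert i S with |γ i - c| minimal
    obtain ⟨γ0, hγ0A, hγ0t⟩ := hSi_att
    set T := A'.filter (fun γ => ∑ j ∈ insert i S, γ j = ρSi) with hT
    have hTne : T.Nonempty := ⟨γ0, by simp [hT, hγ0A, hγ0t]⟩
    obtain ⟨γ, hγT, hγmin⟩ := T.exists_min_image (fun γ => |γ i - c|) hTne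
    have hγA : γ ∈ A' := (Finset.mem_filter.mp hγT).1
    have hγtight : ∑ j ∈ insert i S, γ j = ρSi := (Finset.mem_filter.mp hγT).2
    have hγi : γ i = c := by
      rcases lt_trichotomy (γ i) c with hlt | heq | hgt
      · -- γ i < c : exchange with a slice element
        obtain ⟨β, hβA, hβi⟩ := hslice
        obtain ⟨j, hj, _hβ', hγ'⟩ := hM β hβA γ hγA i (by omega)
        have hji : j ≠ i := by intro h; rw [h] at hj; omega
        have hle := hSi_le _ hγ'
        rw [sum_exch' γ i j (insert i S), hγtight,
          if_pos (Finset.mem_insert_self i S)] at hle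
        have hjS : j ∈ insert i S := by
          by_contra hns; rw [if_neg hns] at hle; omega
        have hγ'T : (γ + Pi.single i 1 - Pi.single j 1 : Fin n → ℤ) ∈ T := by
          rw [hT, Finset.mem_filter]
          refine ⟨hγ', ?_⟩
          rw [sum_exch' γ i j (insert i S), hγtight, if_pos (Finset.mem_insert_self i S),
            if_pos hjS]
          ring
        have hc := hγmin _ hγ'T
        rw [apply_exch' γ i j i, if_pos rfl, if_neg (Ne.symm hji)] at hc
        have habs1 : |γ i + 1 - 0 - c| < |γ i - c| := by
          rw [abs_of_nonpos (by omega), abs_of_neg (by omega : γ i - c < 0)]; omega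
        omega
      · exact heq
      · -- γ i > c
        exfalso
        have hγS : ∑ j ∈ S, γ j = ρSi - γ i := by
          rw [Finset.sum_insert hiS] at hγtight; omega
        obtain ⟨γ1, hγ1A, hγ1t⟩ := hS_att
        set T2 := A'.filter (fun γ' => ∑ j ∈ S, γ' j = ρS) with hT2
        have hT2ne : T2.Nonempty := ⟨γ1, by simp [hT2, hγ1A, hγ1t]⟩
        obtain ⟨γ₂, hγ₂T, hγ₂min⟩ := T2.exists_min_image (fun γ' => D1 γ' γ) hT2ne
        have hγ₂A : γ₂ ∈ A' := (Finset.mem_filter.mp hγ₂T).1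
        have hγ₂tight : ∑ j ∈ S, γ₂ j = ρS := (Finset.mem_filter.mp hγ₂T).2
        obtain ⟨k, hkS, hk⟩ : ∃ k ∈ S, γ k < γ₂ k := by
          apply Finset.exists_lt_of_sum_lt; omega
        obtain ⟨j, hj, hγ₂', hγ'⟩ := hM γ₂ hγ₂A γ hγA k hk
        have hjk : j ≠ k := by intro h; rw [h] at hj; omega
        by_cases hjS : j ∈ S
        · have hmem : (γ₂ - Pi.single k 1 + Pi.single j 1 : Fin n → ℤ) ∈ T2 := by
            rw [hT2, Finset.mem_filter]
            refine ⟨hγ₂', ?_⟩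
            rw [sum_exch γ₂ k j S, hγ₂tight, if_pos hkS, if_pos hjS]; ring
          have hc := hγ₂min _ hmem
          rw [D1_exch γ₂ γ k j (Ne.symm hjk) hk hj] at hc
          omega
        · by_cases hji : j = i
          · have hmem : (γ + Pi.single k 1 - Pi.single j 1 : Fin n → ℤ) ∈ T := by
              rw [hT, Finset.mem_filter]
              refine ⟨hγ', ?_⟩
              rw [sum_exch' γ k j (insert i S), hγtight,
                if_pos (Finset.mem_insert_of_mem hkS), if_pos (hji ▸ Finset.mem_insert_self i S)]
              ring
            have hc := hγmin _ hmem
            rw [apply_exch' γ k j i, if_neg (by rintro rfl; exact hiS hkS), if_pos hji.symm] at hc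
            have habs1 : |γ i + 0 - 1 - c| < |γ i - c| := by
              rw [abs_of_nonneg (by omega), abs_of_pos (by omega : (0:ℤ) < γ i - c)]; omega
            omega
          · have hle := hSi_le _ hγ'
            rw [sum_exch' γ k j (insert i S), hγtight,
              if_pos (Finset.mem_insert_of_mem hkS),
              if_neg (by simp [hji, hjS])] at hle
            omega
    refine ⟨γ, hγA, hγi, ?_⟩
    rw [Finset.sum_insert hiS, hγi] at hγtight
    omega
  · push_neg at hcase
    obtain ⟨γ1, hγ1A, hγ1t⟩ := hS_att
    set T := A'.filter (fun γ' => ∑ j ∈ S, γ' j = ρS) with hT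
    have hTne : T.Nonempty := ⟨γ1, by simp [hT, hγ1A, hγ1t]⟩
    obtain ⟨γ, hγT, hγmin⟩ := T.exists_min_image (fun γ' => |γ' i - c|) hTne
    have hγA : γ ∈ A' := (Finset.mem_filter.mp hγT).1
    have hγtight : ∑ j ∈ S, γ j = ρS := (Finset.mem_filter.mp hγT).2
    have hγi : γ i = c := by
      rcases lt_trichotomy (γ i) c with hlt | heq | hgt
      · -- γ i < c
        exfalso
        have hγinsert : ∑ j ∈ insert i S, γ j < ρSi := by
          rw [Finset.sum_insert hiS]; omega
        obtain ⟨γ0, hγ0A, hγ0t⟩ := hSi_att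
        set T2 := A'.filter (fun γ' => ∑ j ∈ insert i S, γ' j = ρSi) with hT2
        have hT2ne : T2.Nonempty := ⟨γ0, by simp [hT2, hγ0A, hγ0t]⟩
        obtain ⟨γ₂, hγ₂T, hγ₂min⟩ := T2.exists_min_image (fun γ' => D1 γ' γ) hT2ne
        have hγ₂A : γ₂ ∈ A' := (Finset.mem_filter.mp hγ₂T).1
        have hγ₂tight : ∑ j ∈ insert i S, γ₂ j = ρSi := (Finset.mem_filter.mp hγ₂T).2
        obtain ⟨k, hkI, hk⟩ : ∃ k ∈ insert i S, γ k < γ₂ k := by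
          apply Finset.exists_lt_of_sum_lt; omega
        obtain ⟨j, hj, hγ₂', hγ'⟩ := hM γ₂ hγ₂A γ hγA k hk
        have hjk : j ≠ k := by intro h; rw [h] at hj; omega
        by_cases hjI : j ∈ insert i S
        · have hmem : (γ₂ - Pi.single k 1 + Pi.single j 1 : Fin n → ℤ) ∈ T2 := by
            rw [hT2, Finset.mem_filter]
            refine ⟨hγ₂', ?_⟩
            rw [sum_exch γ₂ k j (insert i S), hγ₂tight, if_pos hkI, if_pos hjI]; ring
          have hc := hγ₂min _ hmem
          rw [D1_exch γ₂ γ k j (Ne.symm hjk) hk hj] at hc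
          omega
        · have hjS : j ∉ S := fun h => hjI (Finset.mem_insert_of_mem h)
          have hji : j ≠ i := fun h => hjI (h ▸ Finset.mem_insert_self i S)
          by_cases hki : k = i
          · have hmem : (γ + Pi.single k 1 - Pi.single j 1 : Fin n → ℤ) ∈ T := by
              rw [hT, Finset.mem_filter]
              refine ⟨hγ', ?_⟩
              rw [sum_exch' γ k j S, hγtight, if_neg (hki ▸ hiS), if_neg hjS]; ring
            have hc := hγmin _ hmem
            rw [apply_exch' γ k j i, if_pos hki.symm, if_neg (Ne.symm hji)] at hc
            have habs1 : |γ i + 1 - 0 - c| < |γ i - c| := by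
              rw [abs_of_nonpos (by omega), abs_of_neg (by omega : γ i - c < 0)]; omega
            omega
          · have hkS : k ∈ S := by
              rcases Finset.mem_insert.mp hkI with h | h
              · exact absurd h hki
              · exact h
            have hle := hS_le _ hγ'
            rw [sum_exch' γ k j S, hγtight, if_pos hkS, if_neg hjS] at hle
            omega
      · exact heq
      · -- γ i > c : exchange with slice element
        exfalso
        obtain ⟨β, hβA, hβi⟩ := hslice
        obtain ⟨j, hj, hγ', _hβ'⟩ := hM γ hγA β hβA i (by omega)
        have hji : j ≠ i := by intro h; rw [h] at hj; omega
        by_cases hjS : j ∈ S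
        · have hle := hS_le _ hγ'
          rw [sum_exch γ i j S, hγtight, if_neg hiS, if_pos hjS] at hle
          omega
        · have hmem : (γ - Pi.single i 1 + Pi.single j 1 : Fin n → ℤ) ∈ T := by
            rw [hT, Finset.mem_filter]
            refine ⟨hγ', ?_⟩
            rw [sum_exch γ i j S, hγtight, if_neg hiS, if_neg hjS]; ring
          have hc := hγmin _ hmem
          rw [apply_exch γ i j i, if_pos rfl, if_neg (Ne.symm hji)] at hc
          have habs1 : |γ i - 1 + 0 - c| < |γ i - c| := by
            rw [abs_of_nonneg (by omega), abs_of_pos (by omega : (0:ℤ) < γ i - c)]; omega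
          omega
    exact ⟨γ, hγA, hγi, by omega⟩

lemma mconvex_slice (A' : Finset (Fin n → ℤ)) (hM : MConvex A') (i : Fin n) (c : ℤ) :
    MConvex (A'.filter (fun α => α i = c)) := by
  intro a ha b hb k hk
  obtain ⟨haA, hai⟩ := Finset.mem_filter.mp ha
  obtain ⟨hbA, hbi⟩ := Finset.mem_filter.mp hb
  obtain ⟨j, hj, h1, h2⟩ := hM a haA b hbA k hk
  have hki : k ≠ i := by intro h; rw [h] at hk; omega
  have hji : j ≠ i := by intro h; rw [h] at hj; omega
  refine ⟨j, hj, Finset.mem_filter.mpr ⟨h1, ?_⟩, Finset.mem_filter.mpr ⟨h2, ?_⟩⟩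
  · rw [apply_exch a k j i, if_neg (Ne.symm hki), if_neg (Ne.symm hji)]; omega
  · rw [apply_exch' b k j i, if_neg (Ne.symm hki), if_neg (Ne.symm hji)]; omega

lemma hole_aux (x : Fin n → ℤ) (d : ℤ) (hxsum : ∑ i, x i = d) (F : Finset (Fin n)) :
    ∀ A' : Finset (Fin n → ℤ), A'.Nonempty → MConvex A' →
      (∀ α ∈ A', ∑ i, α i = d) →
      (∀ α ∈ A', ∀ j, j ∉ F → α j = x j) →
      (∀ S ⊆ F, ∃ α ∈ A', ∑ i ∈ S, x i ≤ ∑ i ∈ S, α i) →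
      x ∈ A' := by
  induction F using Finset.strongInductionOn with
  | _ F ih =>
    intro A' hA' hM hdeg hout hfeas
    rcases Finset.eq_empty_or_nonempty F with rfl | ⟨i, hiF⟩
    · obtain ⟨α, hα⟩ := hA'
      have hax : α = x := funext fun j => hout α hα j (Finset.notMem_empty j)
      rwa [← hax]
    · set c := x i with hc
      -- a slice element exists
      obtain ⟨βp, hβpA, hβp⟩ := hfeas ({i} : Finset (Fin n)) (Finset.singleton_subset_iff.mpr hiF)
      rw [Finset.sum_singleton, Finset.sum_singleton] at hβp
      obtain ⟨γm, hγmA, hγmmax⟩ :=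
        A'.exists_max_image (fun α => ∑ j ∈ F.erase i, α j) hA'
      obtain ⟨αe, hαeA, hαe⟩ := hfeas (F.erase i) (Finset.erase_subset i F)
      have hγme : ∑ j ∈ F.erase i, x j ≤ ∑ j ∈ F.erase i, γm j :=
        le_trans hαe (hγmmax αe hαeA)
      have hγmi : γm i ≤ c := by
        have e1 : ∑ j ∈ Finset.univ \ F, γm j + ∑ j ∈ F, γm j = ∑ j, γm j :=
          Finset.sum_sdiff (Finset.subset_univ F)
        have e2 : ∑ j ∈ Finset.univ \ F, x j + ∑ j ∈ F, x j = ∑ j, x j :=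
          Finset.sum_sdiff (Finset.subset_univ F)
        have e3 : ∑ j ∈ Finset.univ \ F, γm j = ∑ j ∈ Finset.univ \ F, x j :=
          Finset.sum_congr rfl fun j hj => hout γm hγmA j (Finset.mem_sdiff.mp hj).2
        have e4 : γm i + ∑ j ∈ F.erase i, γm j = ∑ j ∈ F, γm j :=
          Finset.add_sum_erase F γm hiF
        have e5 : x i + ∑ j ∈ F.erase i, x j = ∑ j ∈ F, x j :=
          Finset.add_sum_erase F x hiF
        have e6 := hdeg γm hγmA
        omega
      have hslice : ∃ β ∈ A', β i = c := by
        set T := A'.filter (fun β => c ≤ β i) with hT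
        have hTne : T.Nonempty := ⟨βp, Finset.mem_filter.mpr ⟨hβpA, hβp⟩⟩
        obtain ⟨β, hβT, hβmin⟩ := T.exists_min_image (fun β => β i) hTne
        obtain ⟨hβA, hβc⟩ := Finset.mem_filter.mp hβT
        rcases eq_or_lt_of_le hβc with heq | hlt
        · exact ⟨β, hβA, heq.symm⟩
        · exfalso
          obtain ⟨j, hj, hβ', _⟩ := hM β hβA γm hγmA i (by omega)
          have hji : j ≠ i := by intro h; rw [h] at hj; omega
          have hmem : (β - Pi.single i 1 + Pi.single j 1 : Fin n → ℤ) ∈ T := by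
            rw [hT, Finset.mem_filter]
            refine ⟨hβ', ?_⟩
            rw [apply_exch β i j i, if_pos rfl, if_neg (Ne.symm hji)]
            omega
          have hcon := hβmin _ hmem
          rw [apply_exch β i j i, if_pos rfl, if_neg (Ne.symm hji)] at hcon
          omega
      -- the slice
      set A'' := A'.filter (fun α => α i = c) with hA''
      obtain ⟨βs, hβsA, hβsi⟩ := hslice
      have hA''ne : A''.Nonempty := ⟨βs, Finset.mem_filter.mpr ⟨hβsA, hβsi⟩⟩
      have hM'' : MConvex A'' := mconvex_slice A' hM i c
      have hdeg'' : ∀ α ∈ A'', ∑ j, α j = d := fun α hα =>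
        hdeg α (Finset.mem_filter.mp hα).1
      have hout'' : ∀ α ∈ A'', ∀ j, j ∉ F.erase i → α j = x j := by
        intro α hα j hj
        obtain ⟨hαA, hαi⟩ := Finset.mem_filter.mp hα
        by_cases hji : j = i
        · rw [hji]; exact hαi
        · exact hout α hαA j fun hjF => hj (Finset.mem_erase.mpr ⟨hji, hjF⟩)
      have hfeas'' : ∀ S ⊆ F.erase i, ∃ α ∈ A'', ∑ k ∈ S, x k ≤ ∑ k ∈ S, α k := by
        intro S hS
        have hiS : i ∉ S := fun h => (Finset.mem_erase.mp (hS h)).1 rfl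
        have hSF : S ⊆ F := hS.trans (Finset.erase_subset i F)
        have hinsF : insert i S ⊆ F := Finset.insert_subset hiF hSF
        obtain ⟨g1, hg1A, hg1max⟩ := A'.exists_max_image (fun α => ∑ j ∈ S, α j) hA'
        obtain ⟨g2, hg2A, hg2max⟩ :=
          A'.exists_max_image (fun α => ∑ j ∈ insert i S, α j) hA'
        obtain ⟨a1, ha1A, ha1⟩ := hfeas S hSF
        obtain ⟨a2, ha2A, ha2⟩ := hfeas (insert i S) hinsF
        have h1 : ∑ k ∈ S, x k ≤ ∑ j ∈ S, g1 j := le_trans ha1 (hg1max a1 ha1A)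
        have h2 : ∑ k ∈ S, x k + c ≤ ∑ j ∈ insert i S, g2 j := by
          have e1 : ∑ k ∈ insert i S, x k = x i + ∑ k ∈ S, x k := Finset.sum_insert hiS
          have e2 := hg2max a2 ha2A
          omega
        obtain ⟨γ, hγA, hγi, hγS⟩ := slice_sup A' hM i c S hiS ⟨βs, hβsA, hβsi⟩
          (∑ j ∈ S, g1 j) (∑ j ∈ insert i S, g2 j)
          (fun α hα => hg1max α hα) ⟨g1, hg1A, rfl⟩
          (fun α hα => hg2max α hα) ⟨g2, hg2A, rfl⟩
          (∑ k ∈ S, x k) h1 h2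
        exact ⟨γ, Finset.mem_filter.mpr ⟨hγA, hγi⟩, hγS⟩
      have hxmem : x ∈ A'' := ih (F.erase i) (Finset.erase_ssubset hiF) A'' hA''ne hM''
        hdeg'' hout'' hfeas''
      exact (Finset.mem_filter.mp hxmem).1

open scoped Classical in
lemma chain_tight (A : Finset (Fin n → ℤ)) (hA : A.Nonempty) (hM : MConvex A)
    (S : ℕ → Finset (Fin n)) (hmono : ∀ k, S k ⊆ S (k+1)) (h0 : S 0 = ∅) (N : ℕ) :
    ∃ α ∈ A, ∀ k ≤ N, ∀ β ∈ A, ∑ i ∈ S k, β i ≤ ∑ i ∈ S k, α i := by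
  have hmon : Monotone S := monotone_nat_of_le_succ hmono
  obtain ⟨α, hαA, hαmax⟩ :=
    A.exists_max_image (fun α => ∑ k ∈ Finset.range (N+1), ∑ i ∈ S k, α i) hA
  refine ⟨α, hαA, ?_⟩
  by_contra hcon
  push_neg at hcon
  obtain ⟨k0, hk0N, β0, hβ0A, hβ0⟩ := hcon
  have hex : ∃ k, ∃ β ∈ A, ∑ i ∈ S k, α i < ∑ i ∈ S k, β i := ⟨k0, β0, hβ0A, hβ0⟩
  set k1 := Nat.find hex with hk1
  obtain ⟨γ0, hγ0A, hγ0⟩ := Nat.find_spec hex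
  rw [← hk1] at hγ0
  have hk1N : k1 ≤ N := le_trans (Nat.find_min' hex ⟨β0, hβ0A, hβ0⟩) hk0N
  have hk1pos : k1 ≠ 0 := by
    intro h
    rw [h, h0] at hγ0
    simp at hγ0
  obtain ⟨m, hm⟩ : ∃ m, k1 = m + 1 := ⟨k1 - 1, by omega⟩
  have hPm : ∀ β ∈ A, ∑ i ∈ S m, β i ≤ ∑ i ∈ S m, α i := by
    have hh := Nat.find_min hex (m := m) (by omega)
    push_neg at hh
    exact hh
  -- maximum value on S k1
  obtain ⟨g, hgA, hgmax⟩ := A.exists_max_image (fun γ => ∑ i ∈ S k1, γ i) hA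
  set T := A.filter (fun γ => ∑ i ∈ S k1, γ i = ∑ i ∈ S k1, g i) with hT
  have hTne : T.Nonempty := ⟨g, Finset.mem_filter.mpr ⟨hgA, rfl⟩⟩
  obtain ⟨γ, hγT, hγmin⟩ := T.exists_min_image (fun γ => D1 γ α) hTne
  obtain ⟨hγA, hγtight⟩ := Finset.mem_filter.mp hγT
  have hγgt : ∑ i ∈ S k1, α i < ∑ i ∈ S k1, γ i := by
    have hh := hgmax γ0 hγ0A
    omega
  have hγm : ∑ i ∈ S m, γ i ≤ ∑ i ∈ S m, α i := hPm γ hγA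
  -- find i in S k1 \ S m with α i < γ i
  have hsub : S m ⊆ S k1 := hm ▸ hmono m
  have hsd1 : ∑ i ∈ S k1 \ S m, α i + ∑ i ∈ S m, α i = ∑ i ∈ S k1, α i :=
    Finset.sum_sdiff hsub
  have hsd2 : ∑ i ∈ S k1 \ S m, γ i + ∑ i ∈ S m, γ i = ∑ i ∈ S k1, γ i :=
    Finset.sum_sdiff hsub
  obtain ⟨i, hisd, hi⟩ : ∃ i ∈ S k1 \ S m, α i < γ i := by
    apply Finset.exists_lt_of_sum_lt; omega
  obtain ⟨hiK, hiM⟩ := Finset.mem_sdiff.mp hisd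
  obtain ⟨j, hj, hγ', hα'⟩ := hM γ hγA α hαA i hi
  have hji : j ≠ i := by intro h; rw [h] at hj; omega
  by_cases hjK : j ∈ S k1
  · -- contradiction with D1-minimality of γ
    have hmem : (γ - Pi.single i 1 + Pi.single j 1 : Fin n → ℤ) ∈ T := by
      rw [hT, Finset.mem_filter]
      refine ⟨hγ', ?_⟩
      rw [sum_exch γ i j (S k1), hγtight, if_pos hiK, if_pos hjK]; ring
    have hc := hγmin _ hmem
    rw [D1_exch γ α i j (Ne.symm hji) hi hj] at hc
    omega
  · -- α + δ i - δ j strictly increases the potential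
    have hper : ∀ k, ∑ i' ∈ S k, (α + Pi.single i 1 - Pi.single j 1 : Fin n → ℤ) i'
        = (∑ i' ∈ S k, α i') + (if i ∈ S k then 1 else 0) - (if j ∈ S k then 1 else 0) :=
      fun k => sum_exch' α i j (S k)
    have hcon2 := hαmax _ hα'
    have hlt : ∑ k ∈ Finset.range (N+1), ∑ i' ∈ S k, α i'
        < ∑ k ∈ Finset.range (N+1),
            ∑ i' ∈ S k, (α + Pi.single i 1 - Pi.single j 1 : Fin n → ℤ) i' := by
      apply Finset.sum_lt_sum
      · intro k _
        rw [hper k]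
        rcases le_total k k1 with h | h
        · have hnj : j ∉ S k := fun hjk => hjK (hmon h hjk)
          rw [if_neg hnj]
          split <;> omega
        · have hii : i ∈ S k := hmon h hiK
          rw [if_pos hii]
          split <;> omega
      · refine ⟨k1, Finset.mem_range.mpr (by omega), ?_⟩
        rw [hper k1, if_pos hiK, if_neg hjK]
        omega
    omega

lemma abel_le (c D : ℕ → ℝ) (hc : ∀ k, c (k+1) ≤ c k) (hD : ∀ k, D k ≤ 0) (hD0 : D 0 = 0) :
    ∀ m, ∑ k ∈ Finset.range m, c k * (D (k+1) - D k) ≤ c m * D m := by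
  intro m
  induction m with
  | zero => simp [hD0]
  | succ m ih =>
    rw [Finset.sum_range_succ]
    have h1 := hc m
    have h2 := hD (m+1)
    nlinarith [ih]

lemma exists_greedy (A : Finset (Fin n → ℤ)) (hA : A.Nonempty) (hM : MConvex A)
    (d : ℤ) (hdeg : ∀ α ∈ A, ∑ i, α i = d) (w : Fin n → ℝ) :
    ∃ α ∈ A, ∀ x : Fin n → ℝ,
      (∀ S : Finset (Fin n), ∑ i ∈ S, x i ≤ ((A.sup' hA fun β => ∑ i ∈ S, β i : ℤ) : ℝ)) →
      (∑ i, x i = (d : ℝ)) →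
      ∑ i, w i * x i ≤ ∑ i, w i * (α i : ℝ) := by
  rcases Nat.eq_zero_or_pos n with hn | hn
  · obtain ⟨α, hα⟩ := hA
    refine ⟨α, hα, fun x _ _ => ?_⟩
    subst hn
    simp
  -- sort w decreasingly
  set u := Tuple.sort (fun i => -w i) with hu
  have hsort : Monotone ((fun i => -w i) ∘ u) := Tuple.monotone_sort (fun i => -w i)
  set SS : ℕ → Finset (Fin n) := fun k => univ.filter (fun i => ((u.symm i : Fin n) : ℕ) < k)
    with hSS
  have hmono : ∀ k, SS k ⊆ SS (k+1) := by
    intro k i hi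
    rw [hSS, Finset.mem_filter] at hi ⊢
    exact ⟨hi.1, by omega⟩
  have hmon : Monotone SS := monotone_nat_of_le_succ hmono
  have h0 : SS 0 = ∅ := by
    rw [hSS]
    ext i; simp
  have huniv : ∀ k, n ≤ k → SS k = univ := by
    intro k hk
    rw [hSS]
    ext i
    simp only [Finset.mem_filter, Finset.mem_univ, true_and, iff_true]
    exact lt_of_lt_of_le (u.symm i).isLt hk
  have hins : ∀ (k : ℕ) (hk : k < n),
      SS (k+1) = insert (u ⟨k, hk⟩) (SS k) ∧ u ⟨k, hk⟩ ∉ SS k := by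
    intro k hk
    constructor
    · ext i
      rw [hSS]
      simp only [Finset.mem_filter, Finset.mem_univ, true_and, Finset.mem_insert]
      constructor
      · intro h
        rcases Nat.lt_succ_iff_lt_or_eq.mp h with h' | h'
        · exact Or.inr (by simpa using h')
        · left
          rw [← Equiv.symm_apply_eq]
          exact Fin.ext h'
      · rintro (rfl | h)
        · rw [Equiv.symm_apply_apply]
          exact Nat.lt_succ_self k
        · omega
    · rw [hSS]
      simp
  obtain ⟨α, hαA, hαmax'⟩ := chain_tight A hA hM SS hmono h0 n
  have hαmax : ∀ k, ∀ β ∈ A, ∑ i ∈ SS k, β i ≤ ∑ i ∈ SS k, α i := by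
    intro k β hβ
    rcases le_or_gt k n with h | h
    · exact hαmax' k h β hβ
    · rw [huniv k (by omega)]
      have e1 : ∑ i ∈ univ, β i = d := hdeg β hβ
      have e2 : ∑ i ∈ univ, α i = d := hdeg α hαA
      omega
  refine ⟨α, hαA, fun x hx1 hx2 => ?_⟩
  set αr : Fin n → ℝ := fun i => (α i : ℝ) with hαr
  set D : ℕ → ℝ := fun k => (∑ i ∈ SS k, x i) - ∑ i ∈ SS k, αr i with hD
  have hDle : ∀ k, D k ≤ 0 := by
    intro k
    have h1 := hx1 (SS k)
    have h2 : ((A.sup' hA fun β => ∑ i ∈ SS k, β i : ℤ) : ℝ) = ∑ i ∈ SS k, αr i := by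
      have h3 : (A.sup' hA fun β => ∑ i ∈ SS k, β i) = ∑ i ∈ SS k, α i := by
        apply le_antisymm
        · exact Finset.sup'_le hA _ fun β hβ => hαmax k β hβ
        · exact Finset.le_sup' _ hαA
      rw [h3, hαr]
      push_cast
      rfl
    rw [hD]
    simp only []
    rw [← h2]
    linarith
  have hD0 : D 0 = 0 := by rw [hD]; simp [h0]
  have hDn : D n = 0 := by
    rw [hD]
    simp only [huniv n le_rfl]
    have e2 : ∑ i ∈ univ, αr i = ((d : ℤ) : ℝ) := by
      rw [hαr, ← hdeg α hαA]
      push_cast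
      rfl
    rw [hx2] at *
    rw [e2]
    ring
  set c : ℕ → ℝ := fun k => w (u ⟨min k (n-1), by omega⟩) with hcdef
  have hc : ∀ k, c (k+1) ≤ c k := by
    intro k
    rw [hcdef]
    have hh := hsort (a := ⟨min k (n-1), by omega⟩) (b := ⟨min (k+1) (n-1), by omega⟩)
      (by rw [Fin.mk_le_mk]; omega)
    simp only [Function.comp_apply] at hh
    linarith
  have hmain : ∑ i, w i * (x i - αr i) = ∑ k ∈ Finset.range n, c k * (D (k+1) - D k) := by
    have hterm : ∀ k (hk : k < n),
        c k * (D (k+1) - D k) = w (u ⟨k, hk⟩) * (x (u ⟨k, hk⟩) - αr (u ⟨k, hk⟩)) := by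
      intro k hk
      obtain ⟨hin, hnm⟩ := hins k hk
      have hck : c k = w (u ⟨k, hk⟩) := by
        have hmin : min k (n-1) = k := by omega
        rw [hcdef]
        simp only [hmin]
      have hDk : D (k+1) - D k = x (u ⟨k, hk⟩) - αr (u ⟨k, hk⟩) := by
        rw [hD]
        simp only [hin, Finset.sum_insert hnm]
        ring
      rw [hck, hDk]
    have e1 : ∑ k ∈ Finset.range n, c k * (D (k+1) - D k)
        = ∑ k ∈ Finset.range n, (fun m : ℕ => if hk : m < n then
            w (u ⟨m, hk⟩) * (x (u ⟨m, hk⟩) - αr (u ⟨m, hk⟩)) else 0) k := by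
      apply Finset.sum_congr rfl
      intro k hk
      have hkn := Finset.mem_range.mp hk
      simp only [dif_pos hkn]
      exact hterm k hkn
    rw [e1, ← Fin.sum_univ_eq_sum_range]
    rw [← Equiv.sum_comp u (fun i => w i * (x i - αr i))]
    apply Finset.sum_congr rfl
    intro j _
    simp only [Fin.is_lt, dif_pos, Fin.eta]
  have habel := abel_le c D hc hDle hD0 n
  rw [hDn, mul_zero] at habel
  rw [← hmain] at habel
  have hfinal : ∑ i, w i * (x i - αr i) = ∑ i, w i * x i - ∑ i, w i * (α i : ℝ) := by
    rw [hαr, ← Finset.sum_sub_distrib]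
    apply Finset.sum_congr rfl
    intro i _
    ring
  linarith [habel, hfinal.le]

end MConvexAux

open Finset MConvexAux in
/-- Let `A ⊆ (ℤ_{≥0})ⁿ` be a nonempty finite M-convex set of vectors of coordinate sum
`d` and `ρ(S) = max_{α∈A} ∑_{i∈S} α_i`.  Then the convex hull of `A` in `ℝⁿ` is the
base polytope `B(ρ)`, and `A = B(ρ) ∩ ℤⁿ`. -/
theorem convexHull_eq_basePolytope {n : ℕ} (d : ℕ)
    (A : Finset (Fin n → ℤ)) (hA : A.Nonempty)
    (hpos : ∀ α ∈ A, ∀ i, 0 ≤ α i)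
    (hdeg : ∀ α ∈ A, ∑ i, α i = (d : ℤ))
    (hM : MConvex A) :
    convexHull ℝ ((fun (α : Fin n → ℤ) (i : Fin n) => (α i : ℝ)) '' ↑A) =
        {x : Fin n → ℝ | (∀ i, 0 ≤ x i) ∧
          (∀ S : Finset (Fin n), ∑ i ∈ S, x i ≤ (rhoOf A hA S : ℝ)) ∧
          ∑ i, x i = (d : ℝ)} ∧
      ∀ α : Fin n → ℤ, α ∈ A ↔
        ((∀ i, 0 ≤ α i) ∧
          (∀ S : Finset (Fin n), ∑ i ∈ S, α i ≤ rhoOf A hA S) ∧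
          ∑ i, α i = (d : ℤ)) := by
  constructor
  · apply Set.Subset.antisymm
    · -- convex hull ⊆ base polytope
      apply convexHull_min
      · rintro y ⟨α, hαA, rfl⟩
        have hαA' : α ∈ A := hαA
        refine ⟨fun i => show (0:ℝ) ≤ (α i : ℝ) by exact_mod_cast hpos α hαA' i,
          fun S => ?_, ?_⟩
        · have h1 : ∑ i ∈ S, α i ≤ rhoOf A hA S := Finset.le_sup' _ hαA'
          calc ∑ i ∈ S, ((α i : ℝ)) = ((∑ i ∈ S, α i : ℤ) : ℝ) := by push_cast; rfl
            _ ≤ (rhoOf A hA S : ℝ) := by exact_mod_cast h1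
        · calc ∑ i, ((α i : ℝ)) = ((∑ i, α i : ℤ) : ℝ) := by push_cast; rfl
            _ = (d : ℝ) := by rw [hdeg α hαA']; simp
      · -- the base polytope is convex
        intro x hx y hy a b ha hb hab
        obtain ⟨hx0, hxS, hxd⟩ := hx
        obtain ⟨hy0, hyS, hyd⟩ := hy
        refine ⟨fun i => ?_, fun S => ?_, ?_⟩
        · have h1 := hx0 i; have h2 := hy0 i
          simp only [Pi.add_apply, Pi.smul_apply, smul_eq_mul]
          nlinarith
        · have h1 := hxS S; have h2 := hyS S
          simp only [Pi.add_apply, Pi.smul_apply, smul_eq_mul, Finset.sum_add_distrib,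
            ← Finset.mul_sum]
          have h3 : a * ∑ i ∈ S, x i ≤ a * (rhoOf A hA S : ℝ) :=
            mul_le_mul_of_nonneg_left h1 ha
          have h4 : b * ∑ i ∈ S, y i ≤ b * (rhoOf A hA S : ℝ) :=
            mul_le_mul_of_nonneg_left h2 hb
          have h5 : a * (rhoOf A hA S : ℝ) + b * (rhoOf A hA S : ℝ) = (rhoOf A hA S : ℝ) := by
            rw [← add_mul, hab, one_mul]
          linarith
        · simp only [Pi.add_apply, Pi.smul_apply, smul_eq_mul, Finset.sum_add_distrib,
            ← Finset.mul_sum]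
          rw [hxd, hyd, ← add_mul, hab, one_mul]
    · -- base polytope ⊆ convex hull
      intro x hx
      obtain ⟨hx0, hxS, hxsum⟩ := hx
      by_contra hxn
      have hfin : ((fun (α : Fin n → ℤ) (i : Fin n) => (α i : ℝ)) '' ↑A).Finite :=
        (A.finite_toSet).image _
      obtain ⟨f, u0, hfs, hfx⟩ := geometric_hahn_banach_closed_point
        (convex_convexHull ℝ _) (hfin.isClosed_convexHull (𝕜 := ℝ)) hxn
      set w : Fin n → ℝ := fun i => f (Pi.single i 1) with hw
      have hf : ∀ y : Fin n → ℝ, f y = ∑ i, w i * y i := by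
        intro y
        have hrepr : y = ∑ i, y i • (Pi.single i 1 : Fin n → ℝ) := by
          have h := pi_eq_sum_univ y
          convert h using 2 with i
          funext j
          simp only [Pi.smul_apply, Pi.single_apply, smul_eq_mul]
          rcases eq_or_ne i j with rfl | hij
          · simp
          · simp [hij, Ne.symm hij]
        calc f y = f (∑ i, y i • (Pi.single i 1 : Fin n → ℝ)) := by rw [← hrepr]
          _ = ∑ i, y i • f (Pi.single i 1) := by rw [map_sum]; simp
          _ = ∑ i, w i * y i := by
              apply Finset.sum_congr rfl
              intro i _
              rw [hw, smul_eq_mul, mul_comm]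
      obtain ⟨α, hαA, hαmax⟩ := exists_greedy A hA hM (d : ℤ) hdeg w
      have h1 : ∑ i, w i * x i ≤ ∑ i, w i * (α i : ℝ) :=
        hαmax x (fun S => hxS S) hxsum
      have h2 : f (fun i => (α i : ℝ)) < u0 :=
        hfs _ (subset_convexHull ℝ _ ⟨α, hαA, rfl⟩)
      rw [hf] at h2
      rw [hf] at hfx
      linarith
  · intro α
    constructor
    · intro hαA
      exact ⟨hpos α hαA, fun S => Finset.le_sup' _ hαA, hdeg α hαA⟩
    · rintro ⟨h1, h2, h3⟩
      apply hole_aux α (d : ℤ) h3 Finset.univ A hA hM hdeg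
        (fun β hβ j hj => absurd (Finset.mem_univ j) hj)
      intro S _
      obtain ⟨β, hβ, hβeq⟩ := Finset.exists_mem_eq_sup' hA (fun γ => ∑ i ∈ S, γ i)
      refine ⟨β, hβ, ?_⟩
      have hle : ∑ i ∈ S, α i ≤ A.sup' hA (fun γ => ∑ i ∈ S, γ i) := h2 S
      rw [hβeq] at hle
      exact hle
end

section
/- Let h ∈ ℝ[x₁,…,xₙ] be a nonzero homogeneous polynomial all of whose coefficients are nonnegative, let e ∈ ℝ^n have all entries strictly positive, and let S ⊆ [n]. Then the degree of the univariate polynomial p(t) = h(e + t·Σ_{i∈S} δᵢ) equals max_{α ∈ supp(h)} Σ_{i∈S} αᵢ, where supp(h) ⊆ (ℤ_{≥0})^n is the set of exponent vectors of monomials occurring in h and δᵢ is the i-th standard unit vector of ℝ^n. -/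
open MvPolynomial

/-- Let `h ∈ ℝ[x₁,…,xₙ]` be a nonzero homogeneous polynomial with nonnegative
coefficients, let `e ∈ ℝⁿ` be entrywise positive and `S ⊆ [n]`.  Then the degree of
the univariate polynomial `p(t) = h(e + t·Σ_{i∈S} δᵢ)` equals
`max_{α ∈ supp h} Σ_{i∈S} α_i`. -/
theorem natDegree_eval_direction {n d : ℕ} (h : MvPolynomial (Fin n) ℝ)
    (hne : h ≠ 0) (hhom : h.IsHomogeneous d)
    (hcoeff : ∀ m, 0 ≤ h.coeff m)
    (e : Fin n → ℝ) (he : ∀ i, 0 < e i) (S : Finset (Fin n)) :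
    (MvPolynomial.aeval
        (fun i : Fin n =>
          Polynomial.C (e i) + if i ∈ S then (Polynomial.X : Polynomial ℝ) else 0)
        h).natDegree =
      h.support.sup fun m => ∑ i ∈ S, m i := by
  set g : Fin n → Polynomial ℝ := fun i =>
    Polynomial.C (e i) + if i ∈ S then (Polynomial.X : Polynomial ℝ) else 0 with hgdef
  have hglead : ∀ i, (g i).leadingCoeff = if i ∈ S then 1 else e i := by
    intro i
    by_cases hi : i ∈ S <;> simp [hgdef, hi, add_comm (Polynomial.C (e i)) Polynomial.X,
      Polynomial.leadingCoeff_X_add_C]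
  have hgdeg : ∀ i, (g i).natDegree = if i ∈ S then 1 else 0 := by
    intro i
    by_cases hi : i ∈ S <;> simp [hgdef, hi, add_comm (Polynomial.C (e i)) Polynomial.X,
      Polynomial.natDegree_X_add_C]
  have hg0 : ∀ i, g i ≠ 0 := by
    intro i hi
    have := hglead i
    rw [hi] at this
    by_cases h' : i ∈ S <;> simp [h'] at this
    · exact (he i).ne' this.symm
  set P : (Fin n →₀ ℕ) → Polynomial ℝ := fun m => ∏ i, g i ^ m i with hPdef
  have hP0 : ∀ m, P m ≠ 0 := fun m =>
    Finset.prod_ne_zero_iff.mpr fun i _ => pow_ne_zero _ (hg0 i)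
  have hPdeg : ∀ m, (P m).natDegree = ∑ i ∈ S, m i := by
    intro m
    rw [hPdef, Polynomial.natDegree_prod _ _ (fun i _ => pow_ne_zero _ (hg0 i))]
    have : ∀ i, (g i ^ m i).natDegree = if i ∈ S then m i else 0 := by
      intro i
      rw [Polynomial.natDegree_pow, hgdeg i]
      by_cases hi : i ∈ S <;> simp [hi]
    simp only [this]
    rw [Finset.sum_ite_mem, Finset.univ_inter]
  have hPlead : ∀ m, 0 < (P m).leadingCoeff := by
    intro m
    rw [hPdef, Polynomial.leadingCoeff_prod]
    apply Finset.prod_pos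
    intro i _
    rw [Polynomial.leadingCoeff_pow, hglead i]
    by_cases hi : i ∈ S
    · simp [hi]
    · simp only [hi, if_false]
      exact pow_pos (he i) _
  have hp : (MvPolynomial.aeval g h) = ∑ m ∈ h.support, Polynomial.C (h.coeff m) * P m := by
    rw [aeval_def, eval₂_eq]
    refine Finset.sum_congr rfl fun m hm => ?_
    rw [Polynomial.algebraMap_eq]
    congr 1
    refine Finset.prod_subset (Finset.subset_univ _) fun i _ hi => ?_
    rw [Finsupp.notMem_support_iff.mp hi, pow_zero]
  set D : ℕ := h.support.sup (fun m => ∑ i ∈ S, m i) with hDdef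
  have hub : (MvPolynomial.aeval g h).natDegree ≤ D := by
    rw [hp]
    refine Polynomial.natDegree_sum_le_of_forall_le _ _ fun m hm => ?_
    calc (Polynomial.C (h.coeff m) * P m).natDegree ≤ (P m).natDegree :=
          Polynomial.natDegree_C_mul_le _ _
      _ = ∑ i ∈ S, m i := hPdeg m
      _ ≤ D := Finset.le_sup (f := fun m => ∑ i ∈ S, m i) hm
  have hsupp : h.support.Nonempty := by
    rwa [Finset.nonempty_iff_ne_empty, ne_eq, MvPolynomial.support_eq_empty]
  obtain ⟨m₀, hm₀, hm₀D⟩ := Finset.exists_mem_eq_sup _ hsupp (fun m => ∑ i ∈ S, m i)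
  have hcoeffD : 0 < (MvPolynomial.aeval g h).coeff D := by
    rw [hp, Polynomial.finset_sum_coeff]
    have hterm : ∀ m ∈ h.support, 0 ≤ (Polynomial.C (h.coeff m) * P m).coeff D := by
      intro m hm
      rw [Polynomial.coeff_C_mul]
      rcases lt_or_eq_of_le (Finset.le_sup (f := fun m => ∑ i ∈ S, m i) hm) with hlt | heq
      · rw [Polynomial.coeff_eq_zero_of_natDegree_lt (by rw [hPdeg]; exact hlt), mul_zero]
      · have heq' : ∑ i ∈ S, m i = D := heq
        have : (P m).coeff D = (P m).leadingCoeff := by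
          rw [Polynomial.leadingCoeff, hPdeg m, heq']
        rw [this]
        exact mul_nonneg (hcoeff m) (hPlead m).le
    refine Finset.sum_pos' hterm ⟨m₀, hm₀, ?_⟩
    rw [Polynomial.coeff_C_mul]
    have hm₀D' : D = ∑ i ∈ S, m₀ i := hm₀D
    have : (P m₀).coeff D = (P m₀).leadingCoeff := by
      rw [Polynomial.leadingCoeff, hPdeg m₀, ← hm₀D']
    rw [this]
    have hc0 : 0 < h.coeff m₀ :=
      lt_of_le_of_ne (hcoeff m₀) (Ne.symm (MvPolynomial.mem_support_iff.mp hm₀))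
    exact mul_pos hc0 (hPlead m₀)
  have hlb : D ≤ (MvPolynomial.aeval g h).natDegree :=
    Polynomial.le_natDegree_of_ne_zero hcoeffD.ne'
  exact le_antisymm hub hlb
end
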